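/- If V is a commutative semigroup variety with V ≠ COM, then V = G ∨ C_m ∨ N for some Abelian periodic group variety G, some m ≥ 0, and some nil-variety N. -/

import Mathlib

/-!
Formalization framework: semigroup varieties as Galois-closed equational theories
over the free semigroup on countably many letters.  A variety is represented by
its equational theory; the order `V ≤ W` ("V is a subvariety of W") is reverse
inclusion of theories.  `Com` is the lattice of commutative semigroup varieties,
realized as the subtype of varieties whose theory contains the commutative law.
-/

open FreeSemigroup

/-- Words: elements of the free semigroup over a countably infinite alphabet. -/
abbrev Word : Type := FreeSemigroup ℕ

/-- A semigroup identity `u = v`. -/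
abbrev SgId : Type := Word × Word

/-- `spow a n = a ^ (n + 1)` in any (multiplicative) semigroup. -/
def spow {M : Type*} [Mul M] (a : M) : ℕ → M
  | 0 => a
  | n + 1 => a * spow a n

/-- A semigroup `S` satisfies the identity `e.1 = e.2`. -/
def SatS (S : Type) [Semigroup S] (e : SgId) : Prop :=
  ∀ σ : ℕ → S, FreeSemigroup.lift σ e.1 = FreeSemigroup.lift σ e.2

/-- `S` is a model of the set of identities `E`. -/
def Models (S : Type) [Semigroup S] (E : Set SgId) : Prop :=
  ∀ e ∈ E, SatS S e

/-- The equational theory generated by `E`: all identities holding in every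
model of `E` (by Birkhoff's theorem this is exactly deductive closure). -/
def eqTh (E : Set SgId) : Set SgId :=
  { e | ∀ (S : Type) [Semigroup S], Models S E → SatS S e }

theorem subset_eqTh (E : Set SgId) : E ⊆ eqTh E := by
  intro e he S _ hS
  exact hS e he

theorem eqTh_mono {E F : Set SgId} (h : E ⊆ F) : eqTh E ⊆ eqTh F := by
  intro e he S _ hS
  exact he S fun e' he' => hS e' (h he')

theorem eqTh_idem (E : Set SgId) : eqTh (eqTh E) = eqTh E := by
  refine Set.Subset.antisymm ?_ (subset_eqTh _)
  intro e he S _ hS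
  exact he S fun e' he' => he' S hS

/-- A semigroup variety, given by its (Galois-closed) equational theory. -/
structure SgVariety where
  th : Set SgId
  closed : eqTh th = th

theorem SgVariety.ext' {V W : SgVariety} (h : V.th = W.th) : V = W := by
  cases V; cases W; cases h; rfl

/-- The variety defined by a set of identities. -/
def varOf (E : Set SgId) : SgVariety :=
  ⟨eqTh E, eqTh_idem E⟩

/-- `V ≤ W` iff `V` is a subvariety of `W`, i.e. the theory of `W` is contained
in the theory of `V`. -/
instance : PartialOrder SgVariety where
  le V W := W.th ⊆ V.th
  le_refl V := Set.Subset.refl _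
  le_trans a b c h1 h2 := Set.Subset.trans h2 h1
  le_antisymm a b h1 h2 := SgVariety.ext' (Set.Subset.antisymm h2 h1)

/-- The lattice **SEM** of all semigroup varieties: join is intersection of
theories; meet is the variety defined by the union of the theories. -/
instance : Lattice SgVariety :=
  { (inferInstance : PartialOrder SgVariety) with
    sup := fun V W =>
      ⟨V.th ∩ W.th, by
        refine Set.Subset.antisymm (Set.subset_inter ?_ ?_) (subset_eqTh _)
        · exact (eqTh_mono Set.inter_subset_left).trans (le_of_eq V.closed)
        · exact (eqTh_mono Set.inter_subset_right).trans (le_of_eq W.closed)⟩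
    le_sup_left := fun V W => Set.inter_subset_left
    le_sup_right := fun V W => Set.inter_subset_right
    sup_le := fun V W U h1 h2 => Set.subset_inter h1 h2
    inf := fun V W => varOf (V.th ∪ W.th)
    inf_le_left := fun V W => Set.subset_union_left.trans (subset_eqTh _)
    inf_le_right := fun V W => Set.subset_union_right.trans (subset_eqTh _)
    le_inf := fun U V W h1 h2 =>
      (eqTh_mono (Set.union_subset h1 h2)).trans (le_of_eq U.closed) }

/-- The letters `x`, `y`, `z`. -/
def xw : Word := FreeSemigroup.of 0
def yw : Word := FreeSemigroup.of 1
def zw : Word := FreeSemigroup.of 2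

/-- The commutative law `xy = yx`. -/
def commId : SgId := (xw * yw, yw * xw)

/-- The lattice **Com**: commutative semigroup varieties. -/
abbrev ComVariety : Type := { V : SgVariety // commId ∈ V.th }

instance : Lattice ComVariety :=
  { (inferInstance : PartialOrder ComVariety) with
    sup := fun V W => ⟨V.1 ⊔ W.1, ⟨V.2, W.2⟩⟩
    le_sup_left := fun V W => @le_sup_left SgVariety _ V.1 W.1
    le_sup_right := fun V W => @le_sup_right SgVariety _ V.1 W.1
    sup_le := fun V W U h1 h2 => @sup_le SgVariety _ V.1 W.1 U.1 h1 h2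
    inf := fun V W => ⟨V.1 ⊓ W.1, subset_eqTh _ (Set.mem_union_left _ V.2)⟩
    inf_le_left := fun V W => @inf_le_left SgVariety _ V.1 W.1
    inf_le_right := fun V W => @inf_le_right SgVariety _ V.1 W.1
    le_inf := fun U V W h1 h2 => @le_inf SgVariety _ U.1 V.1 W.1 h1 h2 }

/-- The trivial variety `T`. -/
def trivialVar : SgVariety := varOf Set.univ

/-- The variety `COM` of all commutative semigroups. -/
def COMvar : SgVariety := varOf {commId}

/-- The variety `SL` of semilattices. -/
def SLvar : SgVariety := varOf {commId, (xw * xw, xw)}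

/-- `C_m = var{xᵐ = xᵐ⁺¹, xy = yx}` for `m ≥ 1`, and `C_0 = T`. -/
def Cvar : ℕ → SgVariety
  | 0 => trivialVar
  | m + 1 => varOf {commId, (spow xw m, spow xw (m + 1))}

def Tcom : ComVariety := ⟨trivialVar, subset_eqTh _ (Set.mem_univ _)⟩
def COMcom : ComVariety := ⟨COMvar, subset_eqTh _ rfl⟩
def SLcom : ComVariety := ⟨SLvar, subset_eqTh _ (Set.mem_insert _ _)⟩
def Ccom (m : ℕ) : ComVariety :=
  ⟨Cvar m, by
    cases m with
    | zero => exact subset_eqTh _ (Set.mem_univ _)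
    | succ m => exact subset_eqTh _ (Set.mem_insert _ _)⟩

/-- A semigroup (nonempty, with the given multiplication) is a group. -/
def IsGroupS (S : Type) [Semigroup S] : Prop :=
  ∃ e : S, (∀ a : S, e * a = a ∧ a * e = a) ∧ ∀ a : S, ∃ b : S, a * b = e ∧ b * a = e

/-- A nilsemigroup: there is a zero element and some power of every element is zero. -/
def IsNilS (S : Type) [Semigroup S] : Prop :=
  ∃ z : S, (∀ a : S, z * a = z ∧ a * z = z) ∧ ∀ a : S, ∃ n : ℕ, spow a n = z

/-- A group variety: all its (nonempty) members are groups. -/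
def IsGroupVariety (V : SgVariety) : Prop :=
  ∀ (S : Type) [Semigroup S], Nonempty S → Models S V.th → IsGroupS S

/-- A nil-variety: all its (nonempty) members are nilsemigroups. -/
def IsNilVariety (V : SgVariety) : Prop :=
  ∀ (S : Type) [Semigroup S], Nonempty S → Models S V.th → IsNilS S

/-- A combinatorial variety: all groups in it are singletons. -/
def IsCombinatorial (V : SgVariety) : Prop :=
  ∀ (S : Type) [Semigroup S], Models S V.th → IsGroupS S → Subsingleton S

/-- A periodic variety: satisfies `xⁿ = xⁿ⁺ᵏ` for some `n, k ≥ 1`. -/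
def IsPeriodic (V : SgVariety) : Prop :=
  ∃ n k : ℕ, (spow xw n, spow xw (n + k + 1)) ∈ V.th

/-- The letter `k` occurs in the word `w`. -/
def occursIn (k : ℕ) (w : Word) : Prop := k = w.head ∨ k ∈ w.tail

/-- `S` satisfies the identity `w = 0` (i.e. the system `wx = xw = w`, `x` fresh):
every value of `w` in `S` is a (two-sided) zero element. -/
def SatZeroS (S : Type) [Semigroup S] (w : Word) : Prop :=
  ∀ (σ : ℕ → S) (a : S),
    FreeSemigroup.lift σ w * a = FreeSemigroup.lift σ w ∧
      a * FreeSemigroup.lift σ w = FreeSemigroup.lift σ w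

/-- The variety `V` satisfies the identity `w = 0`. -/
def VSatZero (V : SgVariety) (w : Word) : Prop :=
  ∀ (S : Type) [Semigroup S], Models S V.th → SatZeroS S w

/-- The words `x²`, `x³`, `x²y`, `xy²`, `x²yz`. -/
def w_xx : Word := xw * xw
def w_xxx : Word := xw * xw * xw
def w_xxy : Word := xw * xw * yw
def w_xyy : Word := xw * yw * yw
def w_xxyz : Word := xw * xw * yw * zw

/-- The identity `x²y = xy²`. -/
def idQ : SgId := (w_xxy, w_xyy)

/-- The pair of identities expressing `w = 0`, with `k` a fresh letter. -/
def zeroPair (w : Word) (k : ℕ) : Set SgId :=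
  {(w * FreeSemigroup.of k, w), (FreeSemigroup.of k * w, w)}

/-- `xprodTo n = x₁x₂⋯xₙ` (for `n ≥ 1`), on the letters `0, …, n-1`. -/
def xprodTo : ℕ → Word
  | 0 => FreeSemigroup.of 0
  | 1 => FreeSemigroup.of 0
  | n + 2 => xprodTo (n + 1) * FreeSemigroup.of (n + 1)

/-- `I = var{x²y = xy², x²yz = 0, xy = yx}`. -/
def Ivar : SgVariety := varOf ({commId, idQ} ∪ zeroPair w_xxyz 3)

/-- `K = var{x²y = 0, xy = yx}`. -/
def Kvar : SgVariety := varOf ({commId} ∪ zeroPair w_xxy 2)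

/-- `L = var{x² = 0, xy = yx}`. -/
def Lvar : SgVariety := varOf ({commId} ∪ zeroPair w_xx 1)

/-- `I_n = var{x²yz = x₁⋯xₙ = 0, x²y = xy², xy = yx}`. -/
def Ivarn (n : ℕ) : SgVariety :=
  varOf ({commId, idQ} ∪ zeroPair w_xxyz 3 ∪ zeroPair (xprodTo n) n)

/-- `J = var{x²yz = x³ = 0, x²y = xy², xy = yx}`. -/
def Jvar : SgVariety := varOf ({commId, idQ} ∪ zeroPair w_xxyz 3 ∪ zeroPair w_xxx 1)

/-- `J_n = var{x²yz = x³ = x₁⋯xₙ = 0, x²y = xy², xy = yx}`. -/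
def Jvarn (n : ℕ) : SgVariety :=
  varOf ({commId, idQ} ∪ zeroPair w_xxyz 3 ∪ zeroPair w_xxx 1 ∪ zeroPair (xprodTo n) n)

/-- `K_n = var{x²y = x₁⋯xₙ = 0, xy = yx}`. -/
def Kvarn (n : ℕ) : SgVariety :=
  varOf ({commId} ∪ zeroPair w_xxy 2 ∪ zeroPair (xprodTo n) n)

/-- `L_n = var{x² = x₁⋯xₙ = 0, xy = yx}`. -/
def Lvarn (n : ℕ) : SgVariety :=
  varOf ({commId} ∪ zeroPair w_xx 1 ∪ zeroPair (xprodTo n) n)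

/-- Generators of `ZR(U)`: the commutative law together with all 0-reduced
identities (in the form of the corresponding identity pairs) holding in `U`. -/
def ZRgen (U : SgVariety) : Set SgId :=
  {commId} ∪ { e : SgId | ∃ (w : Word) (k : ℕ), ¬ occursIn k w ∧ VSatZero U w ∧
      (e = (w * FreeSemigroup.of k, w) ∨ e = (FreeSemigroup.of k * w, w)) }

/-- `ZR(U)`: the variety given by the commutative law and all 0-reduced
identities holding in `U`. -/
def ZRvar (U : SgVariety) : SgVariety := varOf (ZRgen U)

def Icom : ComVariety := ⟨Ivar, subset_eqTh _ (Set.mem_union_left _ (Set.mem_insert _ _))⟩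

def ZRcom (U : SgVariety) : ComVariety :=
  ⟨ZRvar U, subset_eqTh _ (Set.mem_union_left _ rfl)⟩

/-- All nilsemigroups in `V` are nilpotent of degree ≤ n, i.e. satisfy `x₁⋯xₙ = 0`. -/
def HasDegLe (V : SgVariety) (n : ℕ) : Prop :=
  ∀ (S : Type) [Semigroup S], Nonempty S → Models S V.th → IsNilS S → SatZeroS S (xprodTo n)

/-- `deg V = d` (with `d = ⊤` meaning infinite degree). -/
def DegIs (V : SgVariety) (d : ℕ∞) : Prop :=
  (∃ n : ℕ, 0 < n ∧ d = (n : ℕ∞) ∧ IsLeast {m : ℕ | 0 < m ∧ HasDegLe V m} n) ∨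
    (d = ⊤ ∧ ∀ n : ℕ, 0 < n → ¬ HasDegLe V n)

/-- Upper-modular element of a lattice. -/
def IsUpperModular {L : Type*} [Lattice L] (a : L) : Prop :=
  ∀ b c : L, b ≤ a → a ⊓ (b ⊔ c) = b ⊔ (a ⊓ c)

/-- Codistributive element of a lattice. -/
def IsCodistributive {L : Type*} [Lattice L] (a : L) : Prop :=
  ∀ b c : L, a ⊓ (b ⊔ c) = (a ⊓ b) ⊔ (a ⊓ c)

/-- Costandard element of a lattice. -/
def IsCostandard {L : Type*} [Lattice L] (a : L) : Prop :=
  ∀ b c : L, (a ⊓ b) ⊔ c = (a ⊔ c) ⊓ (b ⊔ c)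

/-- Modular element of a lattice. -/
def IsModularElt {L : Type*} [Lattice L] (a : L) : Prop :=
  ∀ b c : L, b ≤ c → (a ⊔ b) ⊓ c = (a ⊓ c) ⊔ b

/-- Neutral element of a lattice, via the median characterization
(equivalent to: every triple containing `a` generates a distributive
sublattice; Grätzer, "Lattice Theory: Foundation", Theorem 254). -/
def IsNeutralElt {L : Type*} [Lattice L] (a : L) : Prop :=
  ∀ b c : L, (a ⊓ b) ⊔ (b ⊓ c) ⊔ (c ⊓ a) = (a ⊔ b) ⊓ (b ⊔ c) ⊓ (c ⊔ a)
namespace Decomp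

open FreeSemigroup Multiset

/-- letter multiset of a word -/
def toMS (u : Word) : Multiset ℕ := u.head ::ₘ (↑u.tail : Multiset ℕ)

theorem toMS_of (n : ℕ) : toMS (of n) = {n} := rfl

theorem toMS_mul (u v : Word) : toMS (u * v) = toMS u + toMS v := by
  simp [toMS, head_mul, tail_mul]

theorem toMS_ne_zero (u : Word) : toMS u ≠ 0 := by
  simp [toMS]

theorem lift_hom_comp {S T' : Type} [Semigroup S] [Semigroup T'] (g : S →ₙ* T') (σ : ℕ → S)
    (u : Word) : g (FreeSemigroup.lift σ u) = FreeSemigroup.lift (fun n => g (σ n)) u := by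
  induction u using FreeSemigroup.recOnMul with
  | ih1 x => simp
  | ih2 x y hx hy => simp only [map_mul, hx, hy]

theorem lift_lift {S : Type} [Semigroup S] (σ : ℕ → S) (τ : ℕ → Word) (u : Word) :
    FreeSemigroup.lift σ (FreeSemigroup.lift τ u) =
      FreeSemigroup.lift (fun n => FreeSemigroup.lift σ (τ n)) u := by
  induction u using FreeSemigroup.recOnMul with
  | ih1 x => simp
  | ih2 x y hx hy => simp only [map_mul, hx, hy]

theorem lift_spow {S : Type} [Semigroup S] (σ : ℕ → S) (u : Word) (n : ℕ) :
    FreeSemigroup.lift σ (spow u n) = spow (FreeSemigroup.lift σ u) n := by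
  induction n with
  | zero => rfl
  | succ k ih => simp only [spow, map_mul, ih]

theorem spow_succ {S : Type*} [Mul S] (a : S) (n : ℕ) : spow a (n + 1) = a * spow a n := rfl

theorem spow_add {S : Type*} [Semigroup S] (a : S) (i j : ℕ) :
    spow a (i + j + 1) = spow a i * spow a j := by
  induction i with
  | zero => rw [show 0 + j + 1 = j + 1 from by omega, spow_succ]; rfl
  | succ k ih =>
      have h : k + 1 + j + 1 = (k + j + 1) + 1 := by omega
      rw [h, spow_succ, ih, spow_succ, mul_assoc]

theorem toMS_spow (u : Word) (n : ℕ) : toMS (spow u n) = (n + 1) • toMS u := by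
  induction n with
  | zero => simp [spow]
  | succ k ih =>
      rw [spow_succ, toMS_mul, ih]
      ext a
      simp [Multiset.count_nsmul, Multiset.count_add]
      ring

theorem toMS_lift (τ : ℕ → Word) (u : Word) :
    toMS (FreeSemigroup.lift τ u) = (toMS u).bind (fun n => toMS (τ n)) := by
  induction u using FreeSemigroup.recOnMul with
  | ih1 x => simp [toMS_of]
  | ih2 x y hx hy =>
      rw [map_mul, toMS_mul, hx, hy, toMS_mul, Multiset.add_bind]

/-- commutativity of a model, extracted -/
theorem comm_of_models {S : Type} [Semigroup S] {E : Set SgId} (hE : commId ∈ E)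
    (hS : Models S E) : ∀ a b : S, a * b = b * a := by
  intro a b
  have := hS commId hE (fun n => if n = 0 then a else b)
  simpa [commId, xw, yw] using this

theorem eval_eq_prod {S : Type} [CommSemigroup S] (σ : ℕ → S) (u : Word) :
    ((FreeSemigroup.lift σ u : S) : WithOne S) =
      ((toMS u).map (fun n => ((σ n : S) : WithOne S))).prod := by
  induction u using FreeSemigroup.recOnMul with
  | ih1 x => simp [toMS_of]
  | ih2 x y hx hy =>
      rw [map_mul, WithOne.coe_mul, hx, hy, toMS_mul, Multiset.map_add, Multiset.prod_add]

/-- words with the same letter multiset are equal in every commutative semigroup -/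
theorem comm_eqTh_of_toMS_eq {u v : Word} (h : toMS u = toMS v) : (u, v) ∈ eqTh {commId} := by
  intro S _ hS
  have hc := comm_of_models (Set.mem_singleton commId) hS
  letI : CommSemigroup S := { (inferInstance : Semigroup S) with mul_comm := hc }
  intro σ
  have h1 := eval_eq_prod σ u
  have h2 := eval_eq_prod σ v
  rw [h] at h1
  exact WithOne.coe_inj.mp (h1.trans h2.symm)

end Decomp
namespace Decomp

open FreeSemigroup Multiset

/-- a Galois-closed theory containing the commutative law -/
structure Good (T : Set SgId) : Prop where
  closed : eqTh T = T
  comm : commId ∈ T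

variable {T : Set SgId}

theorem Good.mem_of_eqTh (hT : Good T) {e : SgId} (h : e ∈ eqTh T) : e ∈ T := hT.closed ▸ h

theorem Good.refl (hT : Good T) (u : Word) : (u, u) ∈ T :=
  hT.mem_of_eqTh (fun _ _ _ _ => rfl)

theorem Good.symm (hT : Good T) {u v : Word} (h : (u, v) ∈ T) : (v, u) ∈ T :=
  hT.mem_of_eqTh (fun S _ hS σ => (hS _ h σ).symm)

theorem Good.trans (hT : Good T) {u v w : Word} (h1 : (u, v) ∈ T) (h2 : (v, w) ∈ T) :
    (u, w) ∈ T :=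
  hT.mem_of_eqTh (fun S _ hS σ => (hS _ h1 σ).trans (hS _ h2 σ))

theorem Good.mulR (hT : Good T) {u v : Word} (w : Word) (h : (u, v) ∈ T) :
    (u * w, v * w) ∈ T :=
  hT.mem_of_eqTh (fun S _ hS σ => by
    have := hS _ h σ
    simp only [map_mul]
    rw [this])

theorem Good.mulL (hT : Good T) {u v : Word} (w : Word) (h : (u, v) ∈ T) :
    (w * u, w * v) ∈ T :=
  hT.mem_of_eqTh (fun S _ hS σ => by
    have := hS _ h σ
    simp only [map_mul]
    rw [this])

theorem Good.subst (hT : Good T) {u v : Word} (τ : ℕ → Word) (h : (u, v) ∈ T) :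
    (FreeSemigroup.lift τ u, FreeSemigroup.lift τ v) ∈ T :=
  hT.mem_of_eqTh (fun S _ hS σ => by
    rw [lift_lift, lift_lift]
    exact hS _ h _)

theorem Good.ofMS (hT : Good T) {u v : Word} (h : toMS u = toMS v) : (u, v) ∈ T :=
  hT.mem_of_eqTh <| by
    have h1 : ({commId} : Set SgId) ⊆ T := by
      intro e he; rw [Set.mem_singleton_iff] at he; subst he; exact hT.comm
    exact eqTh_mono h1 (comm_eqTh_of_toMS_eq h)

/-- canonical word with a given nonempty letter multiset -/
def listWord : ℕ → List ℕ → Word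
  | a, [] => of a
  | a, b :: l => of a * listWord b l

theorem toMS_listWord (a : ℕ) (l : List ℕ) : toMS (listWord a l) = a ::ₘ (↑l : Multiset ℕ) := by
  induction l generalizing a with
  | nil => rfl
  | cons b l ih => rw [listWord, toMS_mul, toMS_of, ih]; rfl

noncomputable def mWord (s : Multiset ℕ) (h : s ≠ 0) : Word :=
  listWord (s.toList.head (by simpa [Multiset.toList_eq_nil] using h)) (s.toList.tail)

theorem toMS_mWord (s : Multiset ℕ) (h : s ≠ 0) : toMS (mWord s h) = s := by
  unfold mWord
  rw [toMS_listWord]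
  have hne : s.toList ≠ [] := by simpa [Multiset.toList_eq_nil] using h
  have : (s.toList.head hne) :: s.toList.tail = s.toList := List.cons_head_tail hne
  calc (s.toList.head hne) ::ₘ (↑s.toList.tail : Multiset ℕ)
      = (↑((s.toList.head hne) :: s.toList.tail) : Multiset ℕ) := rfl
    _ = (↑s.toList : Multiset ℕ) := by rw [this]
    _ = s := Multiset.coe_toList s

/-- the relation induced by `T` on letter multisets -/
def MR (T : Set SgId) (s t : Multiset ℕ) : Prop :=
  ∃ u v : Word, toMS u = s ∧ toMS v = t ∧ (u, v) ∈ T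

theorem MR.nz1 {s t : Multiset ℕ} (h : MR T s t) : s ≠ 0 := by
  obtain ⟨u, v, hu, hv, _⟩ := h; exact hu ▸ toMS_ne_zero u

theorem MR.nz2 {s t : Multiset ℕ} (h : MR T s t) : t ≠ 0 := by
  obtain ⟨u, v, hu, hv, _⟩ := h; exact hv ▸ toMS_ne_zero v

theorem MR.words (hT : Good T) {s t : Multiset ℕ} (h : MR T s t) {u v : Word}
    (hu : toMS u = s) (hv : toMS v = t) : (u, v) ∈ T := by
  obtain ⟨u0, v0, hu0, hv0, h0⟩ := h
  exact hT.trans (hT.ofMS (hu.trans hu0.symm)) (hT.trans h0 (hT.ofMS (hv0.trans hv.symm)))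

theorem MR.refl (hT : Good T) {s : Multiset ℕ} (h : s ≠ 0) : MR T s s :=
  ⟨mWord s h, mWord s h, toMS_mWord s h, toMS_mWord s h, hT.refl _⟩

theorem MR.of_eq (hT : Good T) {s t : Multiset ℕ} (h : s = t) (h0 : s ≠ 0) : MR T s t :=
  h ▸ MR.refl hT h0

theorem MR.symm (hT : Good T) {s t : Multiset ℕ} (h : MR T s t) : MR T t s := by
  obtain ⟨u, v, hu, hv, h0⟩ := h
  exact ⟨v, u, hv, hu, hT.symm h0⟩

theorem MR.trans (hT : Good T) {s t r : Multiset ℕ} (h1 : MR T s t) (h2 : MR T t r) :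
    MR T s r := by
  obtain ⟨u, v, hu, hv, h0⟩ := h1
  exact ⟨u, mWord r h2.nz2, hu, toMS_mWord _ _,
    hT.trans h0 (h2.words hT hv (toMS_mWord _ _))⟩

theorem MR.add (hT : Good T) {s t : Multiset ℕ} (h : MR T s t) (r : Multiset ℕ) :
    MR T (s + r) (t + r) := by
  rcases eq_or_ne r 0 with rfl | hr
  · simpa using h
  · obtain ⟨u, v, hu, hv, h0⟩ := h
    exact ⟨u * mWord r hr, v * mWord r hr, by rw [toMS_mul, hu, toMS_mWord],
      by rw [toMS_mul, hv, toMS_mWord], hT.mulR _ h0⟩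

theorem MR.subst (hT : Good T) (τ : ℕ → Word) {s t : Multiset ℕ} (h : MR T s t) :
    MR T (s.bind (fun n => toMS (τ n))) (t.bind (fun n => toMS (τ n))) := by
  obtain ⟨u, v, hu, hv, h0⟩ := h
  exact ⟨FreeSemigroup.lift τ u, FreeSemigroup.lift τ v, by rw [toMS_lift, hu],
    by rw [toMS_lift, hv], hT.subst τ h0⟩

end Decomp
namespace Decomp

open FreeSemigroup Multiset

theorem models_eqTh {S : Type} [Semigroup S] {E : Set SgId} (hS : Models S E) :
    Models S (eqTh E) := fun _ he => he S hS

/-- every identity belongs to the theory of the trivial variety -/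
theorem mem_trivial_th (e : SgId) : e ∈ trivialVar.th := fun _ _ hS => hS e (Set.mem_univ e)

/-- the capped additive model: `{0, ..., j}` with truncated addition -/
abbrev Cap (j : ℕ) : Type := {a : ℕ // a ≤ j}

instance capSemigroup (j : ℕ) : Semigroup (Cap j) where
  mul a b := ⟨min (a.1 + b.1) j, by omega⟩
  mul_assoc a b c := by
    apply Subtype.ext
    show min (min (a.1 + b.1) j + c.1) j = min (a.1 + min (b.1 + c.1) j) j
    omega

theorem cap_mul_val {j : ℕ} (a b : Cap j) : (a * b).1 = min (a.1 + b.1) j := rfl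

theorem cap_spow_val {j : ℕ} (a : Cap j) (n : ℕ) : (spow a n).1 = min ((n + 1) * a.1) j := by
  induction n with
  | zero => show a.1 = min (1 * a.1) j; have := a.2; omega
  | succ k ih =>
      rw [spow_succ, cap_mul_val, ih]
      have := a.2
      have h2 : (k + 1 + 1) * a.1 = a.1 + (k+1) * a.1 := by ring
      omega

theorem cap_models (j : ℕ) : Models (Cap (j+1)) {commId, (spow xw j, spow xw (j+1))} := by
  intro e he σ
  rcases he with he | he
  · subst he
    show FreeSemigroup.lift σ (xw * yw) = FreeSemigroup.lift σ (yw * xw)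
    simp only [map_mul]
    apply Subtype.ext
    rw [cap_mul_val, cap_mul_val]
    omega
  · rw [Set.mem_singleton_iff] at he
    subst he
    show FreeSemigroup.lift σ (spow xw j) = FreeSemigroup.lift σ (spow xw (j+1))
    rw [lift_spow, lift_spow]
    apply Subtype.ext
    rw [cap_spow_val, cap_spow_val]
    have := (FreeSemigroup.lift σ xw).2
    rcases Nat.eq_zero_or_pos (FreeSemigroup.lift σ xw).1 with h | h
    · rw [h]; omega
    · have h1 : (j + 1) * (FreeSemigroup.lift σ xw).1 ≥ j + 1 := by nlinarith
      have h2 : (j + 1 + 1) * (FreeSemigroup.lift σ xw).1 ≥ j + 1 := by nlinarith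
      omega

/-- value of a word in the capped model under an indicator assignment -/
theorem cap_indicator_val {j : ℕ} (ℓ : ℕ) (u : Word) :
    (FreeSemigroup.lift (fun n => if n = ℓ then (⟨min 1 (j+1), by omega⟩ : Cap (j+1))
        else ⟨0, by omega⟩) u).1 = min ((toMS u).count ℓ) (j+1) := by
  induction u using FreeSemigroup.recOnMul with
  | ih1 x =>
      simp only [FreeSemigroup.lift_of, toMS_of]
      by_cases h : x = ℓ
      · subst h; simp
      · simp only [h, if_false, Multiset.count_singleton, Ne.symm h]
        simp
  | ih2 x y hx hy =>
      rw [map_mul, cap_mul_val, hx, hy, toMS_mul, Multiset.count_add]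
      omega

/-- completeness: identities of `C_j` have equal capped multiplicity vectors -/
theorem caps_eq_of_mem_Cth {j : ℕ} {u v : Word} (h : (u, v) ∈ (Cvar j).th) (ℓ : ℕ) :
    min ((toMS u).count ℓ) j = min ((toMS v).count ℓ) j := by
  cases j with
  | zero => simp
  | succ j =>
      have hm : Models (Cap (j+1)) (Cvar (j+1)).th := models_eqTh (cap_models j)
      have := hm _ h (fun n => if n = ℓ then (⟨min 1 (j+1), by omega⟩ : Cap (j+1))
        else ⟨0, by omega⟩)
      have h1 := cap_indicator_val (j := j) ℓ u
      have h2 := cap_indicator_val (j := j) ℓ v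
      rw [this] at h1
      rw [← h1, ← h2]

/-- soundness: if capped multiplicity vectors agree then the identity holds in `C_j` -/
theorem mem_Cth_of_caps_eq {j : ℕ} {u v : Word}
    (h : ∀ ℓ, min ((toMS u).count ℓ) j = min ((toMS v).count ℓ) j) : (u, v) ∈ (Cvar j).th := by
  cases j with
  | zero => exact mem_trivial_th _
  | succ j =>
    intro S _ hS
    have hc := comm_of_models (Set.mem_insert _ _) hS
    letI : CommSemigroup S := { (inferInstance : Semigroup S) with mul_comm := hc }
    have hp : ∀ a : S, spow a j = spow a (j+1) := by
      intro a
      have := hS _ (Set.mem_insert_iff.mpr (Or.inr (Set.mem_singleton _))) (fun _ => a)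
      rw [lift_spow, lift_spow] at this
      exact this
    -- in WithOne S, (↑a)^(j+1) = (↑a)^(j+2), hence powers ≥ j+1 collapse
    have hcoe : ∀ (a : S) (n : ℕ), ((spow a n : S) : WithOne S) = (a : WithOne S) ^ (n + 1) := by
      intro a n
      induction n with
      | zero => simp [spow]
      | succ k ih => rw [spow_succ, WithOne.coe_mul, ih]; exact (pow_succ' _ _).symm
    have hpow : ∀ (a : S) (c : ℕ), (a : WithOne S) ^ c = (a : WithOne S) ^ (min c (j+1)) := by
      intro a c
      have base : (a : WithOne S) ^ (j+1) = (a : WithOne S) ^ (j+2) := by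
        rw [← hcoe, ← hcoe, hp]
      have step : ∀ t, (a : WithOne S) ^ (j + 1 + t) = (a : WithOne S) ^ (j + 1) := by
        intro t
        induction t with
        | zero => rfl
        | succ k ih =>
            have : j + 1 + (k+1) = (j + 1 + k) + 1 := by omega
            rw [this, pow_succ, ih, ← pow_succ, show j + 1 + 1 = j + 2 from rfl, ← base]
      rcases le_or_gt c (j+1) with hle | hlt
      · rw [min_eq_left hle]
      · rw [min_eq_right (by omega)]
        have : c = j + 1 + (c - (j+1)) := by omega
        rw [this, step]
    intro σ
    apply WithOne.coe_inj.mp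
    rw [eval_eq_prod, eval_eq_prod]
    classical
    rw [Finset.prod_multiset_map_count, Finset.prod_multiset_map_count]
    have hfs : (toMS u).toFinset = (toMS v).toFinset := by
      ext a
      simp only [Multiset.mem_toFinset, ← Multiset.count_pos]
      have := h a
      omega
    rw [hfs]
    apply Finset.prod_congr rfl
    intro a _
    rw [hpow (σ a) ((toMS u).count a), hpow (σ a) ((toMS v).count a), h a]

end Decomp
namespace Decomp

open FreeSemigroup Multiset

variable {T : Set SgId}

theorem nsmul_singleton_eq_replicate (n x : ℕ) : n • ({x} : Multiset ℕ) = replicate n x := by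
  induction n with
  | zero => simp
  | succ k ih =>
      rw [succ_nsmul, ih, Multiset.replicate_succ, ← Multiset.singleton_add, add_comm]

theorem bind_replicate_zero (s : Multiset ℕ) (a : ℕ → ℕ) :
    (s.bind fun ℓ => replicate (a ℓ) 0) = replicate ((s.map a).sum) 0 := by
  induction s using Multiset.induction_on with
  | empty => simp
  | cons x s ih =>
      rw [Multiset.cons_bind, ih, Multiset.map_cons, Multiset.sum_cons, Multiset.replicate_add]

theorem bind_const_singleton (s : Multiset ℕ) (ℓ : ℕ) :
    (s.bind fun _ => ({ℓ} : Multiset ℕ)) = replicate s.card ℓ := by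
  induction s using Multiset.induction_on with
  | empty => simp
  | cons x s ih => rw [Multiset.cons_bind, ih, Multiset.card_cons]; rfl

theorem sum_map_one (s : Multiset ℕ) : (s.map fun _ => 1).sum = s.card := by
  induction s using Multiset.induction_on with
  | empty => simp
  | cons x s ih => rw [Multiset.map_cons, Multiset.sum_cons, ih, Multiset.card_cons]; omega

theorem sum_map_two (s : Multiset ℕ) (ℓ0 : ℕ) :
    (s.map fun ℓ => if ℓ = ℓ0 then 2 else 1).sum = s.card + s.count ℓ0 := by
  induction s using Multiset.induction_on with
  | empty => simp
  | cons x s ih =>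
      rw [Multiset.map_cons, Multiset.sum_cons, ih, Multiset.card_cons, Multiset.count_cons]
      by_cases hx : x = ℓ0
      · subst hx; simp; omega
      · have h2 : ℓ0 ≠ x := fun h => hx h.symm
        simp [hx, h2]
        omega

/-- Periodicity: a commutative theory strictly above COM contains `xᴺ = xᴺ⁺ᴷ`. -/
theorem exists_periodic (hT : Good T) {u v : Word} (huv : (u, v) ∈ T)
    (hne : toMS u ≠ toMS v) :
    ∃ N K, 1 ≤ N ∧ 1 ≤ K ∧ MR T (replicate N 0) (replicate (N + K) 0) := by
  have key : ∃ p q, 1 ≤ p ∧ 1 ≤ q ∧ p ≠ q ∧ MR T (replicate p 0) (replicate q 0) := by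
    have hcard1 : 1 ≤ (toMS u).card := by
      rcases Nat.eq_zero_or_pos (toMS u).card with h | h
      · exact absurd (Multiset.card_eq_zero.mp h) (toMS_ne_zero u)
      · exact h
    have hcard2 : 1 ≤ (toMS v).card := by
      rcases Nat.eq_zero_or_pos (toMS v).card with h | h
      · exact absurd (Multiset.card_eq_zero.mp h) (toMS_ne_zero v)
      · exact h
    by_cases hc : (toMS u).card = (toMS v).card
    · have : ∃ ℓ0, (toMS u).count ℓ0 ≠ (toMS v).count ℓ0 := by
        by_contra hcon
        push_neg at hcon
        exact hne (Multiset.ext.mpr hcon)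
      obtain ⟨ℓ0, hℓ0⟩ := this
      have h2 := (MR.subst hT (fun ℓ => if ℓ = ℓ0 then spow (of 0) 1 else of 0)
        ⟨u, v, rfl, rfl, huv⟩)
      have hb : ∀ s : Multiset ℕ,
          (s.bind fun n => toMS (if n = ℓ0 then spow (of 0) 1 else of 0)) =
            replicate ((s.map fun ℓ => if ℓ = ℓ0 then 2 else 1).sum) 0 := by
        intro s
        rw [← bind_replicate_zero]
        apply Multiset.bind_congr
        intro x _
        by_cases hx : x = ℓ0 <;>
          simp [hx, toMS_spow, toMS_of, nsmul_singleton_eq_replicate, spow,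
            toMS_mul, Multiset.replicate_succ]
      rw [hb, hb, sum_map_two, sum_map_two] at h2
      exact ⟨_, _, by omega, by omega, by omega, h2⟩
    · have h2 := (MR.subst hT (fun _ => of 0) ⟨u, v, rfl, rfl, huv⟩)
      have hb : ∀ s : Multiset ℕ,
          (s.bind fun n => toMS ((fun (_ : ℕ) => of (0:ℕ)) n)) = replicate s.card 0 :=
        fun s => bind_const_singleton s 0
      rw [hb, hb] at h2
      exact ⟨_, _, hcard1, hcard2, hc, h2⟩
  obtain ⟨p, q, hp, hq, hpq, h⟩ := key
  rcases lt_or_gt_of_ne hpq with hlt | hlt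
  · exact ⟨p, q - p, hp, by omega, by rw [show p + (q - p) = q by omega]; exact h⟩
  · exact ⟨q, p - q, hq, by omega, by rw [show q + (p - q) = p by omega]; exact h.symm hT⟩

/-- `x^base = x^(base+step)` allows shifting any exponent `≥ base` by multiples of `step`. -/
theorem shift (hT : Good T) {base step : ℕ} (hstep : 0 < step)
    (hbase : MR T (replicate base 0) (replicate (base + step) 0)) :
    ∀ a b ℓ (r : Multiset ℕ), base ≤ a → base ≤ b → a % step = b % step →
      MR T (replicate a ℓ + r) (replicate b ℓ + r) := by
  have hbase0 : 0 < base := by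
    rcases Nat.eq_zero_or_pos base with h | h
    · exfalso; apply hbase.nz1; rw [h]; rfl
    · exact h
  have hl : ∀ ℓ, MR T (replicate base ℓ) (replicate (base + step) ℓ) := by
    intro ℓ
    have h2 := MR.subst hT (fun _ => of ℓ) hbase
    have hb : ∀ s : Multiset ℕ,
        (s.bind fun n => toMS ((fun (_ : ℕ) => of ℓ) n)) = replicate s.card ℓ :=
      fun s => bind_const_singleton s ℓ
    rw [hb, hb, Multiset.card_replicate, Multiset.card_replicate] at h2
    exact h2
  have hstep1 : ∀ c ℓ (r : Multiset ℕ), base ≤ c →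
      MR T (replicate c ℓ + r) (replicate (c + step) ℓ + r) := by
    intro c ℓ r hc
    have h3 := (hl ℓ).add hT (replicate (c - base) ℓ + r)
    have e1 : replicate base ℓ + (replicate (c - base) ℓ + r) = replicate c ℓ + r := by
      rw [← add_assoc, ← Multiset.replicate_add, show base + (c - base) = c by omega]
    have e2 : replicate (base + step) ℓ + (replicate (c - base) ℓ + r) =
        replicate (c + step) ℓ + r := by
      rw [← add_assoc, ← Multiset.replicate_add, show base + step + (c - base) = c + step by omega]
    rwa [e1, e2] at h3
  have hiter : ∀ t c ℓ (r : Multiset ℕ), base ≤ c →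
      MR T (replicate c ℓ + r) (replicate (c + t * step) ℓ + r) := by
    intro t
    induction t with
    | zero =>
        intro c ℓ r hc
        have hnz : replicate c ℓ + r ≠ 0 := by
          intro h0
          have := congrArg Multiset.card h0
          simp [Multiset.card_replicate] at this
          omega
        simpa using MR.refl hT hnz
    | succ k ih =>
        intro c ℓ r hc
        refine (ih c ℓ r hc).trans hT ?_
        have h4 := hstep1 (c + k * step) ℓ r (by omega)
        rwa [show c + k * step + step = c + (k+1) * step by ring] at h4
  intro a b ℓ r ha hb hmod
  rcases le_or_gt a b with hab | hab
  · obtain ⟨t, ht⟩ := (Nat.modEq_iff_dvd' hab).mp hmod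
    rw [mul_comm] at ht
    have hbt : b = a + t * step := by omega
    rw [hbt]
    exact hiter t a ℓ r ha
  · obtain ⟨t, ht⟩ := (Nat.modEq_iff_dvd' (le_of_lt hab)).mp hmod.symm
    rw [mul_comm] at ht
    have hat : a = b + t * step := by omega
    rw [hat]
    exact (hiter t b ℓ r hb).symm hT

/-- the pure-power relation -/
def PP (T : Set SgId) (a b : ℕ) : Prop := MR T (replicate a 0) (replicate b 0)

theorem PP.addc (hT : Good T) {a b : ℕ} (h : PP T a b) (c : ℕ) : PP T (a + c) (b + c) := by
  have h2 := MR.add hT h (replicate c 0)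
  rwa [← Multiset.replicate_add, ← Multiset.replicate_add] at h2

/-- structure of the pure-power congruence: true period `P` and a base `A` -/
theorem pure_structure (hT : Good T) {N K : ℕ} (hN : 1 ≤ N) (hK : 1 ≤ K)
    (hper : PP T N (N + K)) :
    ∃ P A, 0 < P ∧ P ∣ K ∧ N ≤ A ∧ (∀ a b, PP T a b → a % P = b % P) ∧
      (∀ a b, A ≤ a → A ≤ b → a % P = b % P →
        ∀ ℓ (r : Multiset ℕ), MR T (replicate a ℓ + r) (replicate b ℓ + r)) := by
  classical
  set D : ℕ → Prop := fun δ => 0 < δ ∧ ∃ a, 0 < a ∧ PP T a (a + δ) with hD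
  have hKD : D K := ⟨hK, N, by omega, hper⟩
  have hex : ∃ δ, D δ := ⟨K, hKD⟩
  set P := Nat.find hex with hPdef
  have hPD : D P := Nat.find_spec hex
  have hPmin : ∀ δ, δ < P → ¬ D δ := fun δ hδ => Nat.find_min hex hδ
  have hdiff : ∀ δ₁ δ₂, D δ₁ → D δ₂ → δ₁ < δ₂ → D (δ₂ - δ₁) := by
    rintro δ₁ δ₂ ⟨h1, a₁, ha₁, hp1⟩ ⟨h2, a₂, ha₂, hp2⟩ hlt
    have q1 : PP T (a₁ + a₂) (a₁ + a₂ + δ₁) := by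
      have := hp1.addc hT a₂
      rwa [show a₁ + δ₁ + a₂ = a₁ + a₂ + δ₁ by omega] at this
    have q2 : PP T (a₁ + a₂) (a₁ + a₂ + δ₂) := by
      have := hp2.addc hT a₁
      rwa [show a₂ + a₁ = a₁ + a₂ by omega, show a₂ + δ₂ + a₁ = a₁ + a₂ + δ₂ by omega] at this
    refine ⟨by omega, a₁ + a₂ + δ₁, by omega, ?_⟩
    have h5 := (q1.symm hT).trans hT q2
    rwa [show a₁ + a₂ + δ₂ = a₁ + a₂ + δ₁ + (δ₂ - δ₁) by omega] at h5
  have hdvd : ∀ δ, D δ → P ∣ δ := by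
    intro δ
    induction δ using Nat.strong_induction_on with
    | _ δ ih =>
        intro hδ
        rcases lt_trichotomy δ P with h | h | h
        · exact absurd hδ (hPmin δ h)
        · exact h ▸ dvd_refl P
        · have h1 : D (δ - P) := hdiff P δ hPD hδ h
          have h2 : P ∣ (δ - P) := ih (δ - P) (by have := hPD.1; omega) h1
          have h3 : δ = (δ - P) + P := by omega
          rw [h3]
          exact Nat.dvd_add h2 (dvd_refl P)
  have hmod : ∀ a b, PP T a b → a % P = b % P := by
    intro a b hab
    have ha : 0 < a := by
      rcases Nat.eq_zero_or_pos a with h | h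
      · exfalso; apply hab.nz1; rw [h]; rfl
      · exact h
    have hb : 0 < b := by
      rcases Nat.eq_zero_or_pos b with h | h
      · exfalso; apply hab.nz2; rw [h]; rfl
      · exact h
    rcases lt_trichotomy a b with h | h | h
    · have hDba : D (b - a) := ⟨by omega, a, ha, by
        rwa [show a + (b - a) = b by omega]⟩
      exact (Nat.modEq_iff_dvd' (le_of_lt h)).mpr (hdvd _ hDba)
    · rw [h]
    · have hDab : D (a - b) := ⟨by omega, b, hb, by
        have := hab.symm hT
        rwa [show b + (a - b) = a by omega]⟩
      exact ((Nat.modEq_iff_dvd' (le_of_lt h)).mpr (hdvd _ hDab)).symm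
  obtain ⟨hPpos, a₀, ha₀, hbase⟩ := hPD
  refine ⟨P, max a₀ N, hPpos, ?_, le_max_right _ _, hmod, ?_⟩
  · have h6 := hmod N (N + K) hper
    have h7 := (Nat.modEq_iff_dvd' (by omega : N ≤ N + K)).mp h6
    simpa using h7
  · intro a b ha hb hm ℓ r
    exact shift hT hPpos hbase a b ℓ r (by omega) (by omega) hm

end Decomp
namespace Decomp

open FreeSemigroup Multiset

variable {T : Set SgId}

theorem bind_const (s : Multiset ℕ) (t : Multiset ℕ) :
    (s.bind fun _ => t) = s.card • t := by
  induction s using Multiset.induction_on with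
  | empty => simp
  | cons x s ih => rw [Multiset.cons_bind, ih, Multiset.card_cons, succ_nsmul, add_comm]

/-- transfer of models along surjective homomorphisms -/
theorem models_of_surj {S S' : Type} [Semigroup S] [Semigroup S'] (g : S →ₙ* S')
    (hsur : ∀ y, ∃ x, g x = y) {E : Set SgId} (hE : Models S E) : Models S' E := by
  intro e he σ
  choose τ hτ using fun n => hsur (σ n)
  have h1 : ∀ u : Word, FreeSemigroup.lift σ u = g (FreeSemigroup.lift τ u) := by
    intro u
    rw [lift_hom_comp]
    have : (fun n => g (τ n)) = σ := funext hτ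
    rw [this]
  rw [h1, h1]
  rw [hE e he τ]

/-- transfer of models along injective homomorphisms -/
theorem models_of_inj {S S' : Type} [Semigroup S] [Semigroup S'] (g : S' →ₙ* S)
    (hinj : Function.Injective g) {E : Set SgId} (hE : Models S E) : Models S' E := by
  intro e he σ
  apply hinj
  rw [lift_hom_comp, lift_hom_comp]
  exact hE e he _

/-- the congruence on the free semigroup given by a Galois-closed theory -/
def tCon (hT : Good T) : Con Word where
  r := fun u v => (u, v) ∈ T
  iseqv := ⟨fun u => hT.refl u, fun h => hT.symm h, fun h1 h2 => hT.trans h1 h2⟩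
  mul' := fun h1 h2 => hT.trans (hT.mulR _ h1) (hT.mulL _ h2)

/-- the relatively free semigroup on countably many generators -/
def FQ (hT : Good T) : Type := (tCon hT).Quotient

instance FQsemigroup (hT : Good T) : Semigroup (FQ hT) :=
  inferInstanceAs (Semigroup (tCon hT).Quotient)

variable (hT : Good T)

def fqmk (u : Word) : FQ hT := ((u : (tCon hT).Quotient) : FQ hT)

theorem fqmk_mul (u v : Word) : fqmk hT (u * v) = fqmk hT u * fqmk hT v :=
  Con.coe_mul u v

theorem fqmk_eq {u v : Word} : fqmk hT u = fqmk hT v ↔ (u, v) ∈ T := Con.eq _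

theorem fqmk_surj : ∀ x : FQ hT, ∃ u : Word, fqmk hT u = x := fun x => Quot.exists_rep x

theorem fqmk_spow (u : Word) (n : ℕ) : fqmk hT (spow u n) = spow (fqmk hT u) n := by
  induction n with
  | zero => rfl
  | succ k ih => rw [spow_succ, spow_succ, fqmk_mul, ih]

theorem FQ_comm : ∀ a b : FQ hT, a * b = b * a := by
  intro a b
  obtain ⟨u, rfl⟩ := fqmk_surj hT a
  obtain ⟨v, rfl⟩ := fqmk_surj hT b
  rw [← fqmk_mul, ← fqmk_mul]
  exact (fqmk_eq hT).mpr (hT.ofMS (by rw [toMS_mul, toMS_mul, add_comm]))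

theorem FQ_models : Models (FQ hT) T := by
  intro e he σ
  choose τ hτ using fun n => fqmk_surj hT (σ n)
  have key : ∀ u : Word, FreeSemigroup.lift σ u = fqmk hT (FreeSemigroup.lift τ u) := by
    intro u
    induction u using FreeSemigroup.recOnMul with
    | ih1 x => simp only [FreeSemigroup.lift_of]; exact (hτ x).symm
    | ih2 x y hx hy => rw [map_mul, map_mul, hx, hy, fqmk_mul]
  rw [key, key]
  exact (fqmk_eq hT).mpr (hT.subst τ he)

theorem mul_spow_comm {S : Type} [Semigroup S] (hc : ∀ a b : S, a * b = b * a)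
    (a b : S) (n : ℕ) : spow (a * b) n = spow a n * spow b n := by
  induction n with
  | zero => rfl
  | succ k ih =>
      rw [spow_succ, spow_succ, spow_succ, ih]
      -- a * b * (spow a k * spow b k) = a * spow a k * (b * spow b k)
      have h1 : ∀ x y z w : S, x * y * (z * w) = x * z * (y * w) := by
        intro x y z w
        rw [mul_assoc, mul_assoc, ← mul_assoc y z w, hc y z, mul_assoc]
      exact h1 a b (spow a k) (spow b k)

theorem spow_idem {S : Type} [Semigroup S] {f : S} (hf : f * f = f) (n : ℕ) : spow f n = f := by
  induction n with
  | zero => rfl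
  | succ k ih => rw [spow_succ, ih, hf]

/-- the group of units at an idempotent `f` -/
def UnitsAt {S : Type} [Semigroup S] (f : S) : Type :=
  {x : S // f * x = x ∧ ∃ y, x * y = f ∧ f * y = y}

@[reducible]
def unitsSemigroup {S : Type} [Semigroup S] (hc : ∀ a b : S, a * b = b * a) (f : S) :
    Semigroup (UnitsAt f) := by
  exact {
    mul := fun X Y => ⟨X.1 * Y.1, by
      obtain ⟨x, hx1, y, hy1, hy2⟩ := X
      obtain ⟨x', hx1', y', hy1', hy2'⟩ := Y
      constructor
      · show f * (x * x') = x * x'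
        rw [← mul_assoc, hx1]
      · refine ⟨y * y', ?_, ?_⟩
        · show x * x' * (y * y') = f
          have h1 : x * x' * (y * y') = (x * y) * (x' * y') := by
            rw [mul_assoc, mul_assoc, ← mul_assoc x' y y', hc x' y, mul_assoc]
          have hff : f * f = f := by
            calc f * f = f * (x * y) := by rw [hy1]
              _ = (f * x) * y := by rw [mul_assoc]
              _ = x * y := by rw [hx1]
              _ = f := hy1
          rw [h1, hy1, hy1', hff]
        · show f * (y * y') = y * y'
          rw [← mul_assoc, hy2]⟩
    mul_assoc := fun X Y Z => Subtype.ext (mul_assoc X.1 Y.1 Z.1) }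

-- note: the `Semigroup` instance above needs the commutativity proof as an argument,
-- so we will always use it with `letI`.

end Decomp
namespace Decomp

open FreeSemigroup Multiset

variable {T : Set SgId}

theorem decompose (X : Multiset ℕ) (ℓ : ℕ) :
    X = replicate (X.count ℓ) ℓ + X.filter (· ≠ ℓ) := by
  ext b
  rw [Multiset.count_add, Multiset.count_replicate, Multiset.count_filter]
  by_cases hb : b = ℓ
  · subst hb; simp
  · simp [hb, Ne.symm, fun h => hb h]

theorem count_filter_ne (X : Multiset ℕ) (ℓ b : ℕ) :
    (X.filter (· ≠ ℓ)).count b = if b = ℓ then 0 else X.count b := by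
  rw [Multiset.count_filter]
  by_cases hb : b = ℓ <;> simp [hb]

/-- the workhorse: simultaneous adjustment of letter multiplicities -/
theorem multiAdjust (hT : Good T) (m N K P A E : ℕ)
    (hshiftNK : ∀ a b ℓ (r : Multiset ℕ), N ≤ a → N ≤ b → a % K = b % K →
      MR T (replicate a ℓ + r) (replicate b ℓ + r))
    (hshiftP : ∀ a b ℓ (r : Multiset ℕ), A ≤ a → A ≤ b → a % P = b % P →
      MR T (replicate a ℓ + r) (replicate b ℓ + r))
    (hrider : ∀ (c : Multiset ℕ), c ≠ 0 → ∀ ℓ0 (r : Multiset ℕ) a b, m ≤ a → m ≤ b →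
      a % P = b % P → MR T (replicate a ℓ0 + (E • c + r)) (replicate b ℓ0 + (E • c + r))) :
    ∀ (n : ℕ) (X₁ X₂ : Multiset ℕ),
      (((X₁ + X₂).toFinset.filter (fun ℓ => X₁.count ℓ ≠ X₂.count ℓ)).card ≤ n) →
      X₁ ≠ 0 → X₂ ≠ 0 →
      (∀ ℓ, X₁.count ℓ = X₂.count ℓ ∨
        (N ≤ X₁.count ℓ ∧ N ≤ X₂.count ℓ ∧ X₁.count ℓ % K = X₂.count ℓ % K) ∨
        (A ≤ X₁.count ℓ ∧ A ≤ X₂.count ℓ ∧ X₁.count ℓ % P = X₂.count ℓ % P) ∨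
        (m ≤ X₁.count ℓ ∧ m ≤ X₂.count ℓ ∧ X₁.count ℓ % P = X₂.count ℓ % P ∧
          ∃ c : Multiset ℕ, c ≠ 0 ∧ ℓ ∉ c ∧ E • c ≤ X₁ ∧ E • c ≤ X₂)) →
      MR T X₁ X₂ := by
  classical
  intro n
  induction n with
  | zero =>
      intro X₁ X₂ hcard hX₁ hX₂ hcond
      have hempty : ∀ ℓ, X₁.count ℓ = X₂.count ℓ := by
        intro ℓ
        by_contra hne
        by_cases hmem : ℓ ∈ (X₁ + X₂).toFinset
        · have : ℓ ∈ (X₁ + X₂).toFinset.filter (fun ℓ => X₁.count ℓ ≠ X₂.count ℓ) :=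
            Finset.mem_filter.mpr ⟨hmem, hne⟩
          have := Finset.card_pos.mpr ⟨ℓ, this⟩
          omega
        · have h0 : (X₁ + X₂).count ℓ = 0 := by
            by_contra h0
            exact hmem (Multiset.mem_toFinset.mpr (Multiset.count_pos.mp (by omega)))
          rw [Multiset.count_add] at h0
          omega
      exact MR.of_eq hT (Multiset.ext.mpr hempty) hX₁
  | succ n ih =>
      intro X₁ X₂ hcard hX₁ hX₂ hcond
      set Dset := (X₁ + X₂).toFinset.filter (fun ℓ => X₁.count ℓ ≠ X₂.count ℓ) with hDset
      rcases Finset.eq_empty_or_nonempty Dset with hD | hD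
      · -- no disagreement
        have hempty : ∀ ℓ, X₁.count ℓ = X₂.count ℓ := by
          intro ℓ
          by_contra hne
          by_cases hmem : ℓ ∈ (X₁ + X₂).toFinset
          · have : ℓ ∈ Dset := Finset.mem_filter.mpr ⟨hmem, hne⟩
            rw [hD] at this
            exact absurd this (Finset.notMem_empty ℓ)
          · have h0 : (X₁ + X₂).count ℓ = 0 := by
              by_contra h0
              exact hmem (Multiset.mem_toFinset.mpr (Multiset.count_pos.mp (by omega)))
            rw [Multiset.count_add] at h0
            omega
        exact MR.of_eq hT (Multiset.ext.mpr hempty) hX₁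
      · -- pick a pivot, preferring letters with positive target count
        have hpivot : ∃ ℓ, ℓ ∈ Dset ∧ (0 < X₂.count ℓ ∨ ∀ ℓ' ∈ Dset, X₂.count ℓ' = 0) := by
          by_cases hpos : ∃ ℓ ∈ Dset, 0 < X₂.count ℓ
          · obtain ⟨ℓ, h1, h2⟩ := hpos
            exact ⟨ℓ, h1, Or.inl h2⟩
          · push_neg at hpos
            obtain ⟨ℓ, hℓ⟩ := hD
            exact ⟨ℓ, hℓ, Or.inr (fun ℓ' h' => by have := hpos ℓ' h'; omega)⟩
        obtain ⟨ℓ, hℓD, hℓpos⟩ := hpivot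
        have hℓne : X₁.count ℓ ≠ X₂.count ℓ := (Finset.mem_filter.mp hℓD).2
        set X' := replicate (X₂.count ℓ) ℓ + X₁.filter (· ≠ ℓ) with hX'
        have hcount' : ∀ b, X'.count b = if b = ℓ then X₂.count ℓ else X₁.count b := by
          intro b
          rw [hX', Multiset.count_add, Multiset.count_replicate, count_filter_ne]
          by_cases hb : b = ℓ
          · simp [hb]
          · have hb2 : ¬ ℓ = b := fun h => hb h.symm
            simp [hb, hb2]
        -- step from X₁ to X'
        have hstep : MR T X₁ X' := by
          have hdec : X₁ = replicate (X₁.count ℓ) ℓ + X₁.filter (· ≠ ℓ) := decompose X₁ ℓ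
          rcases hcond ℓ with h | h | h | h
          · exact absurd h hℓne
          · rw [hdec, hX']
            exact hshiftNK _ _ ℓ _ h.1 h.2.1 h.2.2
          · rw [hdec, hX']
            exact hshiftP _ _ ℓ _ h.1 h.2.1 h.2.2
          · obtain ⟨hm1, hm2, hmod, c, hc0, hcℓ, hc1, hc2⟩ := h
            have hcf : E • c ≤ X₁.filter (· ≠ ℓ) := by
              rw [Multiset.le_iff_count]
              intro b
              rw [count_filter_ne]
              by_cases hb : b = ℓ
              · subst hb
                simp only [if_pos rfl]
                have : c.count b = 0 := Multiset.count_eq_zero.mpr hcℓ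
                rw [Multiset.count_nsmul, this]
                simp
              · rw [if_neg hb]
                exact (Multiset.le_iff_count.mp hc1) b
            obtain ⟨rest, hrest⟩ := Multiset.le_iff_exists_add.mp hcf
            rw [hdec, hX', hrest]
            exact hrider c hc0 ℓ rest _ _ hm1 hm2 hmod
        -- X' is nonzero
        have hX'0 : X' ≠ 0 := by
          rcases hℓpos with hpos | hall
          · intro h0
            have := hcount' ℓ
            rw [h0] at this
            simp at this
            omega
          · intro h0
            apply hX₂
            ext b
            rw [Multiset.count_zero]
            by_cases hb : b = ℓ
            · subst hb; exact hall b hℓD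
            · have hcb : X'.count b = 0 := by rw [h0]; simp
              rw [hcount', if_neg hb] at hcb
              by_cases hbD : X₁.count b = X₂.count b
              · omega
              · -- b is a disagreement letter, so X₂.count b = 0 by hall
                have hbmem : b ∈ (X₁ + X₂).toFinset ∨ (X₁.count b = 0 ∧ X₂.count b = 0) := by
                  by_cases hmem : b ∈ (X₁ + X₂).toFinset
                  · exact Or.inl hmem
                  · right
                    have h0' : (X₁ + X₂).count b = 0 := by
                      by_contra h0'
                      exact hmem (Multiset.mem_toFinset.mpr (Multiset.count_pos.mp (by omega)))
                    rw [Multiset.count_add] at h0'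
                    omega
                rcases hbmem with hmem | ⟨h1, h2⟩
                · exact hall b (Finset.mem_filter.mpr ⟨hmem, hbD⟩)
                · omega
        -- recurse
        have hrec : MR T X' X₂ := by
          apply ih X' X₂ _ hX'0 hX₂
          · intro b
            by_cases hb : b = ℓ
            · subst hb
              left
              rw [hcount', if_pos rfl]
            · rw [hcount', if_neg hb]
              rcases hcond b with h | h | h | h
              · exact Or.inl h
              · exact Or.inr (Or.inl h)
              · exact Or.inr (Or.inr (Or.inl h))
              · obtain ⟨hm1, hm2, hmod, c, hc0, hcb, hc1, hc2⟩ := h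
                refine Or.inr (Or.inr (Or.inr ⟨hm1, hm2, hmod, c, hc0, hcb, ?_, hc2⟩))
                rw [Multiset.le_iff_count]
                intro b'
                rw [hcount']
                by_cases hb' : b' = ℓ
                · rw [if_pos hb']
                  subst hb'
                  exact (Multiset.le_iff_count.mp hc2) b'
                · rw [if_neg hb']
                  exact (Multiset.le_iff_count.mp hc1) b'
          · -- cardinality decreases
            have hsub : ((X' + X₂).toFinset.filter (fun b => X'.count b ≠ X₂.count b)) ⊆
                Dset.erase ℓ := by
              intro b hb
              obtain ⟨hbmem, hbne⟩ := Finset.mem_filter.mp hb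
              have hbℓ : b ≠ ℓ := by
                intro h
                subst h
                rw [hcount', if_pos rfl] at hbne
                exact hbne rfl
              rw [hcount', if_neg hbℓ] at hbne
              refine Finset.mem_erase.mpr ⟨hbℓ, Finset.mem_filter.mpr ⟨?_, hbne⟩⟩
              rw [Multiset.mem_toFinset] at hbmem ⊢
              rw [← Multiset.count_pos] at hbmem ⊢
              rw [Multiset.count_add] at hbmem ⊢
              rw [hcount' b, if_neg hbℓ] at hbmem
              omega
            have h1 := Finset.card_le_card hsub
            have h2 : (Dset.erase ℓ).card < Dset.card := Finset.card_erase_lt_of_mem hℓD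
            omega
        exact hstep.trans hT hrec

end Decomp
namespace Decomp

open FreeSemigroup Multiset

variable {T : Set SgId}

theorem dvd_mod_zero {P x : ℕ} (h : P ∣ x) : x % P = 0 := by
  obtain ⟨t, rfl⟩ := h
  exact Nat.mul_mod_right P t

theorem mod_eq_of_dvd_dvd {P x y : ℕ} (hx : P ∣ x) (hy : P ∣ y) : x % P = y % P := by
  rw [dvd_mod_zero hx, dvd_mod_zero hy]

theorem add_dvd_mod {P a x : ℕ} (h : P ∣ x) : (a + x) % P = a % P := by
  obtain ⟨t, rfl⟩ := h
  exact Nat.add_mul_mod_self_left a P t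

theorem bind_replicate (n x : ℕ) (f : ℕ → Multiset ℕ) :
    (replicate n x).bind f = n • f x := by
  induction n with
  | zero => simp
  | succ k ih => rw [Multiset.replicate_succ, Multiset.cons_bind, ih, succ_nsmul, add_comm]

theorem count_repl (n x b : ℕ) : (replicate n x).count b = if b = x then n else 0 := by
  rw [Multiset.count_replicate]
  by_cases h : b = x
  · simp [h]
  · have h2 : ¬ x = b := fun hh => h hh.symm
    simp [h, h2]

/-- Derivation of the key identity `xᵐ yᴱ = xᵐ⁺ᵈ yᴱ` from a witness against `C_{m+1}`. -/
theorem M2_exists (hT : Good T) (m E P A : ℕ) (hP : 0 < P) (hPE : P ∣ E) (hAE : A ≤ E)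
    (hE1 : 1 ≤ E)
    (hshiftP : ∀ a b ℓ (r : Multiset ℕ), A ≤ a → A ≤ b → a % P = b % P →
      MR T (replicate a ℓ + r) (replicate b ℓ + r))
    {p₀ q₀ : Word} (hpq : (p₀, q₀) ∈ T) (ℓs : ℕ)
    (hα : (toMS p₀).count ℓs = m) (hβ : m + 1 ≤ (toMS q₀).count ℓs) :
    ∃ d, 1 ≤ d ∧
      MR T (replicate m 0 + replicate E 1) (replicate (m + d) 0 + replicate E 1) := by
  have hbind : ∀ s : Multiset ℕ,
      (s.bind fun n => toMS (if n = ℓs then of 0 else spow (of 1) (E - 1))) =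
      replicate (s.count ℓs) 0 + replicate (E * (s.filter (· ≠ ℓs)).card) 1 := by
    intro s
    induction s using Multiset.induction_on with
    | empty => simp
    | cons x s ih =>
        rw [Multiset.cons_bind, ih]
        by_cases hx : x = ℓs
        · subst hx
          have hfc : Multiset.filter (fun y => y ≠ x) (x ::ₘ s) =
              Multiset.filter (fun y => y ≠ x) s := by
            rw [Multiset.filter_cons]
            simp
          rw [if_pos rfl, toMS_of, hfc, Multiset.count_cons_self]
          ext bb
          simp only [Multiset.count_add, count_repl, Multiset.count_singleton]
          split_ifs <;> omega
        · have hfc : Multiset.filter (fun y => y ≠ ℓs) (x ::ₘ s) =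
              x ::ₘ Multiset.filter (fun y => y ≠ ℓs) s := by
            rw [Multiset.filter_cons]
            simp [hx]
          have h1 : toMS (if x = ℓs then of 0 else spow (of 1) (E - 1)) = replicate E 1 := by
            rw [if_neg hx, toMS_spow, toMS_of, nsmul_singleton_eq_replicate]
            congr 1
            omega
          rw [h1, hfc, Multiset.count_cons_of_ne (fun h => hx h.symm), Multiset.card_cons,
            Nat.mul_succ]
          ext bb
          simp only [Multiset.count_add, count_repl]
          split_ifs <;> omega
  have h := MR.subst hT (fun n => if n = ℓs then of 0 else spow (of 1) (E - 1))
    ⟨p₀, q₀, rfl, rfl, hpq⟩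
  rw [hbind, hbind, hα] at h
  set k1 := E * ((toMS p₀).filter (· ≠ ℓs)).card with hk1
  set β := (toMS q₀).count ℓs with hβ'
  set k2 := E * ((toMS q₀).filter (· ≠ ℓs)).card with hk2
  have h2 := h.add hT (replicate E 1)
  have e1 : ∀ mm kk : ℕ, replicate mm 0 + replicate kk 1 + replicate E 1 =
      replicate (kk + E) 1 + replicate mm 0 := by
    intro mm kk
    ext bb
    simp only [Multiset.count_add, count_repl]
    split_ifs <;> omega
  rw [e1, e1] at h2
  have hn1 : MR T (replicate (k1 + E) 1 + replicate m 0) (replicate E 1 + replicate m 0) :=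
    hshiftP _ _ 1 _ (by omega) (by omega)
      (mod_eq_of_dvd_dvd (Dvd.dvd.add (Dvd.dvd.mul_right hPE _) hPE) hPE)
  have hn2 : MR T (replicate (k2 + E) 1 + replicate β 0) (replicate E 1 + replicate β 0) :=
    hshiftP _ _ 1 _ (by omega) (by omega)
      (mod_eq_of_dvd_dvd (Dvd.dvd.add (Dvd.dvd.mul_right hPE _) hPE) hPE)
  have h3 : MR T (replicate E 1 + replicate m 0) (replicate E 1 + replicate β 0) :=
    ((hn1.symm hT).trans hT h2).trans hT hn2
  refine ⟨β - m, by omega, ?_⟩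
  have e3 : replicate m 0 + replicate E 1 = replicate E 1 + replicate m 0 := add_comm _ _
  have e4 : replicate (m + (β - m)) 0 + replicate E 1 = replicate E 1 + replicate β 0 := by
    rw [show m + (β - m) = β by omega]
    exact add_comm _ _
  rw [e3, e4]
  exact h3

/-- From the key identity, exponents `≥ m` of a letter can be adjusted modulo `P`
in the presence of a rider `E • c`. -/
theorem rider_from_M2 (hT : Good T) (m E d P A : ℕ) (hd : 1 ≤ d) (hPd : P ∣ d)
    (hA1 : 1 ≤ A) (hE1 : 1 ≤ E)
    (hM2 : MR T (replicate m 0 + replicate E 1) (replicate (m + d) 0 + replicate E 1))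
    (hshiftP : ∀ a b ℓ (r : Multiset ℕ), A ≤ a → A ≤ b → a % P = b % P →
      MR T (replicate a ℓ + r) (replicate b ℓ + r)) :
    ∀ (c : Multiset ℕ), c ≠ 0 → ∀ ℓ0 (r : Multiset ℕ) a b, m ≤ a → m ≤ b →
      a % P = b % P → MR T (replicate a ℓ0 + (E • c + r)) (replicate b ℓ0 + (E • c + r)) := by
  intro c hc ℓ0 r a b ha hb hmod
  have hEc : (E • c : Multiset ℕ) ≠ 0 := by
    intro h0
    have h1 := congrArg Multiset.card h0
    rw [Multiset.card_nsmul, Multiset.card_zero] at h1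
    have hcpos : 0 < Multiset.card c := Multiset.card_pos.mpr hc
    have : 0 < E * Multiset.card c := Nat.mul_pos (by omega) hcpos
    omega
  have hstep : ∀ a' (r' : Multiset ℕ), m ≤ a' →
      MR T (replicate a' ℓ0 + (E • c + r')) (replicate (a' + d) ℓ0 + (E • c + r')) := by
    intro a' r' ha'
    have h := MR.subst hT (fun n => if n = 0 then of ℓ0 else mWord c hc) hM2
    rw [Multiset.add_bind, Multiset.add_bind, bind_replicate, bind_replicate,
      bind_replicate] at h
    have ht0 : toMS (if (0:ℕ) = 0 then of ℓ0 else mWord c hc) = {ℓ0} := by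
      rw [if_pos rfl, toMS_of]
    have ht1 : toMS (if (1:ℕ) = 0 then of ℓ0 else mWord c hc) = c := by
      rw [if_neg (by omega), toMS_mWord]
    rw [ht0, ht1, nsmul_singleton_eq_replicate, nsmul_singleton_eq_replicate] at h
    have h2 := h.add hT (replicate (a' - m) ℓ0 + r')
    have e1 : ∀ mm : ℕ, replicate mm ℓ0 + E • c + (replicate (a' - m) ℓ0 + r') =
        replicate (mm + (a' - m)) ℓ0 + (E • c + r') := by
      intro mm
      ext bb
      simp only [Multiset.count_add, count_repl]
      split_ifs <;> omega
    rw [e1, e1, show m + (a' - m) = a' by omega, show m + d + (a' - m) = a' + d by omega] at h2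
    exact h2
  have hclimb : ∀ (t : ℕ) (a' : ℕ), m ≤ a' →
      MR T (replicate a' ℓ0 + (E • c + r)) (replicate (a' + t * d) ℓ0 + (E • c + r)) := by
    intro t
    induction t with
    | zero =>
        intro a' ha'
        simp only [Nat.zero_mul, Nat.add_zero]
        apply MR.refl hT
        intro h0
        apply hEc
        have h1 := congrArg Multiset.card h0
        rw [Multiset.card_add, Multiset.card_add, Multiset.card_zero] at h1
        rw [← Multiset.card_eq_zero]
        omega
    | succ k ih =>
        intro a' ha'
        refine (ih a' ha').trans hT ?_
        have h4 := hstep (a' + k * d) r (by omega)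
        rwa [show a' + k * d + d = a' + (k+1) * d by ring] at h4
  have hAd : A ≤ A * d := Nat.le_mul_of_pos_right A (by omega)
  have hmid : MR T (replicate (a + A * d) ℓ0 + (E • c + r))
      (replicate (b + A * d) ℓ0 + (E • c + r)) := by
    apply hshiftP _ _ ℓ0 _ (by omega) (by omega)
    rw [add_dvd_mod (Dvd.dvd.mul_left hPd A), add_dvd_mod (Dvd.dvd.mul_left hPd A)]
    exact hmod
  exact ((hclimb A a ha).trans hT hmid).trans hT ((hclimb A b hb).symm hT)

end Decomp
namespace Decomp

open FreeSemigroup Multiset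

variable {T : Set SgId}

theorem lift_of_id (u : Word) : FreeSemigroup.lift of u = u := by
  induction u using FreeSemigroup.recOnMul with
  | ih1 x => rfl
  | ih2 x y hx hy => rw [map_mul, hx, hy]

theorem fqmk_lift (hT : Good T) (τ : ℕ → Word) (u : Word) :
    FreeSemigroup.lift (fun n => fqmk hT (τ n)) u = fqmk hT (FreeSemigroup.lift τ u) := by
  induction u using FreeSemigroup.recOnMul with
  | ih1 x => simp
  | ih2 x y hx hy => rw [map_mul, map_mul, hx, hy, fqmk_mul]

theorem FQ_per (hT : Good T) (N K : ℕ) (hN : 1 ≤ N)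
    (hper : MR T (replicate N 0) (replicate (N + K) 0)) :
    ∀ a : FQ hT, spow a (N - 1) = spow a (N + K - 1) := by
  intro a
  obtain ⟨w, rfl⟩ := fqmk_surj hT a
  rw [← fqmk_spow, ← fqmk_spow, fqmk_eq]
  have h := MR.subst hT (fun _ => w) hper
  rw [bind_replicate, bind_replicate] at h
  apply h.words hT
  · rw [toMS_spow, show N - 1 + 1 = N by omega]
  · rw [toMS_spow, show N + K - 1 + 1 = N + K by omega]

/-- Extraction from the group side: an identity of `G` holds in `FQ` when
evaluated at units of an idempotent. -/
theorem G_extract (hT : Good T) (N K : ℕ) (hN : 1 ≤ N) (hK : 1 ≤ K)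
    (hperF : ∀ a : FQ hT, spow a (N - 1) = spow a (N + K - 1))
    {u v : Word} (hG : (u, v) ∈ eqTh (T ∪ {(spow xw (K - 1) * yw, yw)}))
    (f : FQ hT) (hf : f * f = f) (g : ℕ → FQ hT)
    (hg : ∀ n, f * g n = g n ∧ ∃ y, g n * y = f ∧ f * y = y) :
    FreeSemigroup.lift g u = FreeSemigroup.lift g v := by
  have hc := FQ_comm hT
  letI : Semigroup (UnitsAt f) := unitsSemigroup hc f
  set σ : ℕ → UnitsAt f := fun n => ⟨g n, hg n⟩ with hσ
  have hval : ∀ (X Y : UnitsAt f), (X * Y).1 = X.1 * Y.1 := fun _ _ => rfl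
  have hval_spow : ∀ (X : UnitsAt f) (n : ℕ), (spow X n).1 = spow X.1 n := by
    intro X n
    induction n with
    | zero => rfl
    | succ k ih => rw [spow_succ, spow_succ, hval, ih]
  -- the key: x^K acts as the identity on elements fixed by f
  have hkey : ∀ x : FQ hT, (f * x = x ∧ ∃ y, x * y = f ∧ f * y = y) →
      ∀ z : FQ hT, f * z = z → spow x (K - 1) * z = z := by
    rintro x ⟨hfx, y, hxy, hfy⟩ z hfz
    have h1 : spow x (N - 1) = spow x (N - 1) * spow x (K - 1) := by
      have h2 := hperF x
      rwa [show N + K - 1 = (N - 1) + (K - 1) + 1 by omega, spow_add] at h2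
    have h3 : spow x (N - 1) * spow y (N - 1) = f := by
      rw [← mul_spow_comm hc, hxy, spow_idem hf]
    have h4 : f = f * spow x (K - 1) := by
      conv_lhs => rw [← h3]
      rw [h1]
      calc spow x (N-1) * spow x (K-1) * spow y (N-1)
          = spow x (N-1) * (spow x (K-1) * spow y (N-1)) := by rw [mul_assoc]
        _ = spow x (N-1) * (spow y (N-1) * spow x (K-1)) := by rw [hc (spow x (K-1)) _]
        _ = spow x (N-1) * spow y (N-1) * spow x (K-1) := by rw [← mul_assoc]
        _ = f * spow x (K-1) := by rw [h3]
    calc spow x (K - 1) * z = spow x (K - 1) * (f * z) := by rw [hfz]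
      _ = spow x (K - 1) * f * z := by rw [mul_assoc]
      _ = f * spow x (K - 1) * z := by rw [hc (spow x (K-1)) f]
      _ = f * z := by rw [← h4]
      _ = z := hfz
  have hmodels : Models (UnitsAt f) (T ∪ {(spow xw (K - 1) * yw, yw)}) := by
    intro e he
    rcases he with he | he
    · refine models_of_inj (⟨Subtype.val, fun {a b} => rfl⟩ : UnitsAt f →ₙ* FQ hT) ?_
        (FQ_models hT) e he
      intro a b h
      exact Subtype.ext h
    · rw [Set.mem_singleton_iff] at he
      subst he
      intro σ'
      show FreeSemigroup.lift σ' (spow xw (K-1) * yw) = FreeSemigroup.lift σ' yw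
      rw [map_mul, lift_spow]
      show spow (σ' 0) (K-1) * σ' 1 = σ' 1
      apply Subtype.ext
      rw [hval, hval_spow]
      exact hkey (σ' 0).1 (σ' 0).2 (σ' 1).1 (σ' 1).2.1
  have hsat := hG (UnitsAt f) hmodels σ
  have hcomp : ∀ w : Word, FreeSemigroup.lift g w = (FreeSemigroup.lift σ w).1 := by
    intro w
    induction w using FreeSemigroup.recOnMul with
    | ih1 x => rfl
    | ih2 x y hx hy => rw [map_mul, map_mul, hval, ← hx, ← hy]
  rw [hcomp, hcomp]
  show (FreeSemigroup.lift σ (u,v).1).1 = (FreeSemigroup.lift σ (u,v).2).1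
  rw [hsat]

/-- Extraction from the nil side. -/
theorem N_extract (hT : Good T) (N : ℕ) (hN : 1 ≤ N)
    {u v : Word} (hNth : (u, v) ∈ eqTh (T ∪ zeroPair (spow xw (N - 1)) 1)) :
    (u, v) ∈ T ∨
      ((∃ (s : Word) (R : Multiset ℕ), MR T (toMS u) (N • toMS s + R)) ∧
       (∃ (p : Word) (R' : Multiset ℕ), MR T (toMS v) (N • toMS p + R'))) := by
  have hc := FQ_comm hT
  set I : Set (FQ hT) :=
    {x | ∃ s : Word, x = fqmk hT (spow s (N-1)) ∨ ∃ r : FQ hT, x = fqmk hT (spow s (N-1)) * r}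
    with hI
  have hIdeal : ∀ x ∈ I, ∀ y, x * y ∈ I := by
    rintro x ⟨s, hx | ⟨r, hx⟩⟩ y
    · exact ⟨s, Or.inr ⟨y, by rw [hx]⟩⟩
    · exact ⟨s, Or.inr ⟨r * y, by rw [hx, mul_assoc]⟩⟩
  have hIdeal2 : ∀ x ∈ I, ∀ y, y * x ∈ I := by
    intro x hx y
    rw [hc y x]
    exact hIdeal x hx y
  set rees : Con (FQ hT) :=
    { r := fun a b => a = b ∨ (a ∈ I ∧ b ∈ I)
      iseqv := ⟨fun _ => Or.inl rfl,
        fun h => by rcases h with h | h; exact Or.inl h.symm; exact Or.inr ⟨h.2, h.1⟩,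
        fun h1 h2 => by
          rcases h1 with h1 | h1
          · rcases h2 with h2 | h2
            · exact Or.inl (h1.trans h2)
            · exact Or.inr ⟨h1 ▸ h2.1, h2.2⟩
          · rcases h2 with h2 | h2
            · exact Or.inr ⟨h1.1, h2 ▸ h1.2⟩
            · exact Or.inr ⟨h1.1, h2.2⟩⟩
      mul' := by
        rintro a b c d (h1 | h1) (h2 | h2)
        · exact Or.inl (by rw [h1, h2])
        · exact Or.inr ⟨hIdeal2 _ h2.1 a, hIdeal2 _ h2.2 b⟩
        · exact Or.inr ⟨hIdeal _ h1.1 c, hIdeal _ h1.2 d⟩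
        · exact Or.inr ⟨hIdeal _ h1.1 c, hIdeal _ h1.2 d⟩ } with hrees
  have hsurj : ∀ y : rees.Quotient, ∃ x : FQ hT, (x : rees.Quotient) = y := fun y =>
    Con.induction_on y (fun x => ⟨x, rfl⟩)
  have hcoesp : ∀ (γ : FQ hT) (n : ℕ),
      spow ((γ : rees.Quotient)) n = ((spow γ n : FQ hT) : rees.Quotient) := by
    intro γ n
    induction n with
    | zero => rfl
    | succ k ih => rw [spow_succ, spow_succ, ih]; rfl
  have hzero : ∀ (α β : FQ hT),
      ((spow α (N-1) : FQ hT) : rees.Quotient) * (β : rees.Quotient) =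
        ((spow α (N-1) : FQ hT) : rees.Quotient) := by
    intro α β
    obtain ⟨a', rfl⟩ := fqmk_surj hT α
    have h1 : spow (fqmk hT a') (N-1) * β ∈ I := by
      apply hIdeal
      exact ⟨a', Or.inl (by rw [fqmk_spow])⟩
    have h2 : spow (fqmk hT a') (N-1) ∈ I := ⟨a', Or.inl (by rw [fqmk_spow])⟩
    have hr : rees (spow (fqmk hT a') (N-1) * β) (spow (fqmk hT a') (N-1)) := Or.inr ⟨h1, h2⟩
    exact (Con.eq rees).mpr hr
  have hzero2 : ∀ (α β : FQ hT),
      (β : rees.Quotient) * ((spow α (N-1) : FQ hT) : rees.Quotient) =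
        ((spow α (N-1) : FQ hT) : rees.Quotient) := by
    intro α β
    obtain ⟨a', rfl⟩ := fqmk_surj hT α
    have h1 : β * spow (fqmk hT a') (N-1) ∈ I := by
      apply hIdeal2
      exact ⟨a', Or.inl (by rw [fqmk_spow])⟩
    have h2 : spow (fqmk hT a') (N-1) ∈ I := ⟨a', Or.inl (by rw [fqmk_spow])⟩
    have hr : rees (β * spow (fqmk hT a') (N-1)) (spow (fqmk hT a') (N-1)) := Or.inr ⟨h1, h2⟩
    exact (Con.eq rees).mpr hr
  have hmodels : Models rees.Quotient (T ∪ zeroPair (spow xw (N - 1)) 1) := by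
    intro e he
    rcases he with he | he
    · refine models_of_surj (⟨fun x => (x : rees.Quotient), fun {a b} => rfl⟩ :
        FQ hT →ₙ* rees.Quotient) hsurj (FQ_models hT) e he
    · rcases he with he | he
      · subst he
        intro σ'
        obtain ⟨α, hα⟩ := hsurj (σ' 0)
        obtain ⟨β, hβ⟩ := hsurj (σ' 1)
        show FreeSemigroup.lift σ' (spow xw (N-1) * of 1) = FreeSemigroup.lift σ' (spow xw (N-1))
        rw [map_mul, lift_spow]
        have e0 : FreeSemigroup.lift σ' xw = σ' 0 := rfl
        have e1 : FreeSemigroup.lift σ' (of 1) = σ' 1 := rfl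
        rw [e0, e1, ← hα, ← hβ, hcoesp]
        exact hzero α β
      · rw [Set.mem_singleton_iff] at he
        subst he
        intro σ'
        obtain ⟨α, hα⟩ := hsurj (σ' 0)
        obtain ⟨β, hβ⟩ := hsurj (σ' 1)
        show FreeSemigroup.lift σ' (of 1 * spow xw (N-1)) = FreeSemigroup.lift σ' (spow xw (N-1))
        rw [map_mul, lift_spow]
        have e0 : FreeSemigroup.lift σ' xw = σ' 0 := rfl
        have e1 : FreeSemigroup.lift σ' (of 1) = σ' 1 := rfl
        rw [e0, e1, ← hα, ← hβ, hcoesp]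
        exact hzero2 α β
  -- evaluate at the canonical generators
  have hsat := hNth rees.Quotient hmodels (fun n => ((fqmk hT (of n) : FQ hT) : rees.Quotient))
  have hcompq : ∀ w : Word,
      FreeSemigroup.lift (fun n => ((fqmk hT (of n) : FQ hT) : rees.Quotient)) w =
        ((fqmk hT w : FQ hT) : rees.Quotient) := by
    intro w
    induction w using FreeSemigroup.recOnMul with
    | ih1 x => rfl
    | ih2 x y hx hy =>
        rw [map_mul, hx, hy, fqmk_mul]
        rfl
  rw [hcompq, hcompq] at hsat
  have hrel : rees (fqmk hT u) (fqmk hT v) := (Con.eq rees).mp hsat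
  rcases hrel with hrel | ⟨hu, hv⟩
  · exact Or.inl ((fqmk_eq hT).mp hrel)
  · right
    constructor
    · obtain ⟨s, hs | ⟨r, hs⟩⟩ := hu
      · refine ⟨s, 0, ?_⟩
        have : (u, spow s (N-1)) ∈ T := (fqmk_eq hT).mp hs
        refine ⟨u, spow s (N-1), rfl, ?_, this⟩
        rw [toMS_spow, show N - 1 + 1 = N by omega, add_zero]
      · obtain ⟨r', rfl⟩ := fqmk_surj hT r
        rw [← fqmk_mul, fqmk_eq] at hs
        refine ⟨s, toMS r', ?_⟩
        refine ⟨u, spow s (N-1) * r', rfl, ?_, hs⟩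
        rw [toMS_mul, toMS_spow, show N - 1 + 1 = N by omega]
    · obtain ⟨s, hs | ⟨r, hs⟩⟩ := hv
      · refine ⟨s, 0, ?_⟩
        have : (v, spow s (N-1)) ∈ T := (fqmk_eq hT).mp hs
        refine ⟨v, spow s (N-1), rfl, ?_, this⟩
        rw [toMS_spow, show N - 1 + 1 = N by omega, add_zero]
      · obtain ⟨r', rfl⟩ := fqmk_surj hT r
        rw [← fqmk_mul, fqmk_eq] at hs
        refine ⟨s, toMS r', ?_⟩
        refine ⟨v, spow s (N-1) * r', rfl, ?_, hs⟩
        rw [toMS_mul, toMS_spow, show N - 1 + 1 = N by omega]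

end Decomp
namespace Decomp

open FreeSemigroup Multiset

variable {T : Set SgId}

theorem add_ne_zero_left {X Y : Multiset ℕ} (hX : X ≠ 0) : X + Y ≠ 0 := by
  intro h0
  apply hX
  have := congrArg Multiset.card h0
  rw [Multiset.card_add, Multiset.card_zero] at this
  rw [← Multiset.card_eq_zero]
  omega

theorem nsmul_ne_zero {X : Multiset ℕ} {n : ℕ} (hn : 1 ≤ n) (hX : X ≠ 0) : n • X ≠ 0 := by
  intro h0
  apply hX
  have := congrArg Multiset.card h0
  rw [Multiset.card_nsmul, Multiset.card_zero] at this
  rw [← Multiset.card_eq_zero]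
  rcases Nat.eq_zero_or_pos (Multiset.card X) with h | h
  · exact h
  · exfalso
    have : 0 < n * Multiset.card X := Nat.mul_pos (by omega) h
    omega

/-- The central theorem at the level of theories. -/
theorem theory_decomp (hT : Good T) {u₀ v₀ : Word} (h0 : (u₀, v₀) ∈ T)
    (hne : toMS u₀ ≠ toMS v₀) :
    ∃ (K N m : ℕ), 1 ≤ K ∧ 1 ≤ N ∧
      (spow xw (N - 1), spow xw (N + K - 1)) ∈ T ∧
      T ⊆ (Cvar m).th ∧
      (∀ u v : Word, (u, v) ∈ eqTh (T ∪ {(spow xw (K - 1) * yw, yw)}) →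
        (u, v) ∈ (Cvar m).th →
        (u, v) ∈ eqTh (T ∪ zeroPair (spow xw (N - 1)) 1) → (u, v) ∈ T) := by
  classical
  obtain ⟨N, K, hN, hK, hper⟩ := exists_periodic hT h0 hne
  have htoMSpow : ∀ (ℓ n : ℕ), 1 ≤ n → toMS (spow (of ℓ) (n - 1)) = replicate n ℓ := by
    intro ℓ n hn
    rw [toMS_spow, toMS_of, nsmul_singleton_eq_replicate, show n - 1 + 1 = n by omega]
  have htoMSpow0 : ∀ n : ℕ, 1 ≤ n → toMS (spow xw (n - 1)) = replicate n 0 :=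
    fun n hn => htoMSpow 0 n hn
  have hxNK : (spow xw (N - 1), spow xw (N + K - 1)) ∈ T := by
    apply hper.words hT
    · exact htoMSpow0 N hN
    · exact htoMSpow0 (N + K) (by omega)
  have hshiftNK := shift hT (show 0 < K by omega) hper
  obtain ⟨P, A, hP, hPK, hNA, hmodPP, hshiftP0⟩ := pure_structure hT hN hK hper
  have hshiftP : ∀ a b ℓ (r : Multiset ℕ), A ≤ a → A ≤ b → a % P = b % P →
      MR T (replicate a ℓ + r) (replicate b ℓ + r) :=
    fun a b ℓ r h1 h2 h3 => hshiftP0 a b h1 h2 h3 ℓ r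
  -- the parameter m
  set Pm : ℕ → Prop := fun j => T ⊆ (Cvar j).th with hPm
  have hm0 : Pm 0 := fun e _ => mem_trivial_th e
  set m := Nat.findGreatest Pm (N + K) with hm
  have hmOK : T ⊆ (Cvar m).th := Nat.findGreatest_spec (Nat.zero_le _) hm0
  have hcountpow : ∀ (n : ℕ), 1 ≤ n → (toMS (spow xw (n - 1))).count 0 = n := by
    intro n hn
    rw [htoMSpow0 n hn, count_repl]
    simp
  have hNKnot : ¬ Pm (N + K) := by
    intro hsub
    have h1 := caps_eq_of_mem_Cth (hsub hxNK) 0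
    rw [hcountpow N hN, hcountpow (N + K) (by omega)] at h1
    omega
  have hmlt : m < N + K := by
    rcases lt_or_eq_of_le (Nat.findGreatest_le (P := Pm) (N + K)) with h | h
    · exact h
    · exact absurd (h ▸ hmOK) hNKnot
  have hmnot : ¬ Pm (m + 1) :=
    Nat.findGreatest_is_greatest (n := N + K) (k := m + 1) (by omega) (by omega)
  obtain ⟨e₀, he₀T, he₀n⟩ := Set.not_subset.mp hmnot
  obtain ⟨p₀, q₀⟩ := e₀
  have hmN : m ≤ N := by
    have h1 := caps_eq_of_mem_Cth (hmOK hxNK) 0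
    rw [hcountpow N hN, hcountpow (N + K) (by omega)] at h1
    omega
  have hcm := fun ℓ => caps_eq_of_mem_Cth (hmOK he₀T) ℓ
  have hℓs : ∃ ℓs, min ((toMS p₀).count ℓs) (m+1) ≠ min ((toMS q₀).count ℓs) (m+1) := by
    by_contra hcon
    push_neg at hcon
    exact he₀n (mem_Cth_of_caps_eq hcon)
  obtain ⟨ℓs, hℓsne⟩ := hℓs
  -- the constant E
  set E := K * (A + 2) with hE
  have hKE : K ∣ E := Dvd.intro _ rfl
  have hPE : P ∣ E := hPK.trans hKE
  have hAE2 : A + 2 ≤ E := by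
    have : 1 * (A + 2) ≤ K * (A + 2) := Nat.mul_le_mul_right _ hK
    omega
  have hAE : A ≤ E := by omega
  have hNE : N ≤ E := by omega
  have hE1 : 1 ≤ E := by omega
  have hE2 : 2 ≤ E := by omega
  -- the key identity M2
  have hM2' : ∃ d, 1 ≤ d ∧
      MR T (replicate m 0 + replicate E 1) (replicate (m + d) 0 + replicate E 1) := by
    have hsplit : ((toMS p₀).count ℓs = m ∧ m + 1 ≤ (toMS q₀).count ℓs) ∨
        ((toMS q₀).count ℓs = m ∧ m + 1 ≤ (toMS p₀).count ℓs) := by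
      have := hcm ℓs
      omega
    rcases hsplit with ⟨h1, h2⟩ | ⟨h1, h2⟩
    · exact M2_exists hT m E P A hP hPE hAE hE1 hshiftP he₀T ℓs h1 h2
    · exact M2_exists hT m E P A hP hPE hAE hE1 hshiftP (hT.symm he₀T) ℓs h1 h2
  obtain ⟨d, hd, hM2⟩ := hM2'
  have hPd : P ∣ d := by
    have h := MR.subst hT (fun _ => of 0) hM2
    have hb : ∀ s : Multiset ℕ,
        (s.bind fun n => toMS ((fun (_ : ℕ) => of (0:ℕ)) n)) = replicate s.card 0 :=
      fun s => bind_const_singleton s 0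
    rw [hb, hb] at h
    simp only [Multiset.card_add, Multiset.card_replicate] at h
    have h2 := hmodPP _ _ h
    have h3 := (Nat.modEq_iff_dvd' (by omega : m + E ≤ m + d + E)).mp h2
    rwa [show m + d + E - (m + E) = d by omega] at h3
  have hrider := rider_from_M2 hT m E d P A hd hPd (by omega) hE1 hM2 hshiftP
  -- the adjustment tool
  have adjust : ∀ X₁ X₂ : Multiset ℕ, X₁ ≠ 0 → X₂ ≠ 0 →
      (∀ ℓ, X₁.count ℓ = X₂.count ℓ ∨
        (N ≤ X₁.count ℓ ∧ N ≤ X₂.count ℓ ∧ X₁.count ℓ % K = X₂.count ℓ % K) ∨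
        (A ≤ X₁.count ℓ ∧ A ≤ X₂.count ℓ ∧ X₁.count ℓ % P = X₂.count ℓ % P) ∨
        (m ≤ X₁.count ℓ ∧ m ≤ X₂.count ℓ ∧ X₁.count ℓ % P = X₂.count ℓ % P ∧
          ∃ c : Multiset ℕ, c ≠ 0 ∧ ℓ ∉ c ∧ E • c ≤ X₁ ∧ E • c ≤ X₂)) →
      MR T X₁ X₂ := fun X₁ X₂ h1 h2 h3 =>
    multiAdjust hT m N K P A E hshiftNK hshiftP hrider _ X₁ X₂ le_rfl h1 h2 h3
  have helperA : ∀ X₁ X₂ : Multiset ℕ, X₁ ≠ 0 → X₂ ≠ 0 →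
      (∀ ℓ, X₁.count ℓ = X₂.count ℓ ∨
        (A ≤ X₁.count ℓ ∧ A ≤ X₂.count ℓ ∧ X₁.count ℓ % P = X₂.count ℓ % P)) →
      MR T X₁ X₂ := by
    intro X₁ X₂ h1 h2 h3
    refine adjust X₁ X₂ h1 h2 (fun ℓ => ?_)
    rcases h3 ℓ with h | h
    · exact Or.inl h
    · exact Or.inr (Or.inr (Or.inl h))
  refine ⟨K, N, m, hK, hN, hxNK, hmOK, ?_⟩
  -- ====== the main inclusion ======
  intro u v hG hC hN'
  set U := toMS u with hU
  set V' := toMS v with hV'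
  have hcaps : ∀ ℓ, min (U.count ℓ) m = min (V'.count ℓ) m :=
    fun ℓ => caps_eq_of_mem_Cth hC ℓ
  rcases N_extract hT N hN hN' with hdone | ⟨⟨s, R₁, hU1⟩, ⟨p, R₂, hV1⟩⟩
  · exact hdone
  set S₁ := toMS s with hS₁def
  set S₂ := toMS p with hS₂def
  have hS₁ : S₁ ≠ 0 := toMS_ne_zero s
  have hS₂ : S₂ ≠ 0 := toMS_ne_zero p
  have hU0 : U ≠ 0 := toMS_ne_zero u
  have hV0 : V' ≠ 0 := toMS_ne_zero v
  have hcapsMR : ∀ {X Y : Multiset ℕ}, MR T X Y → ∀ ℓ, min (X.count ℓ) m = min (Y.count ℓ) m := by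
    intro X Y h ℓ
    obtain ⟨w1, w2, hw1, hw2, hw⟩ := h
    have := caps_eq_of_mem_Cth (hmOK hw) ℓ
    rwa [hw1, hw2] at this
  -- letters of S₁ have multiplicity ≥ m in U (and hence in V')
  have hmulS : ∀ (S R : Multiset ℕ) (X : Multiset ℕ), MR T X (N • S + R) →
      ∀ ℓ ∈ S, m ≤ X.count ℓ := by
    intro S R X hX ℓ hℓ
    have h1 := hcapsMR hX ℓ
    have h2 : N ≤ (N • S + R).count ℓ := by
      rw [Multiset.count_add, Multiset.count_nsmul]
      have : 1 ≤ S.count ℓ := Multiset.one_le_count_iff_mem.mpr hℓ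
      have := Nat.le_mul_of_pos_right N (show 0 < S.count ℓ by omega)
      omega
    omega
  have hUS₁ : ∀ ℓ ∈ S₁, m ≤ U.count ℓ := hmulS S₁ R₁ U hU1
  have hVS₂ : ∀ ℓ ∈ S₂, m ≤ V'.count ℓ := hmulS S₂ R₂ V' hV1
  have hUS₂ : ∀ ℓ ∈ S₂, m ≤ U.count ℓ := by
    intro ℓ hℓ
    have := hVS₂ ℓ hℓ
    have := hcaps ℓ
    omega
  have hVS₁ : ∀ ℓ ∈ S₁, m ≤ V'.count ℓ := by
    intro ℓ hℓ
    have := hUS₁ ℓ hℓ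
    have := hcaps ℓ
    omega
  -- ====== the group-side star facts ======
  set W := U + V' with hW
  have hW0 : W ≠ 0 := add_ne_zero_left hU0
  have hEW0 : (E • W : Multiset ℕ) ≠ 0 := nsmul_ne_zero hE1 hW0
  set wf := mWord (E • W) hEW0 with hwf
  have hwfMS : toMS wf = E • W := toMS_mWord _ _
  set f := fqmk hT wf with hfdef
  have mkT : ∀ (w1 w2 : Word), MR T (toMS w1) (toMS w2) → (w1, w2) ∈ T :=
    fun w1 w2 h => h.words hT rfl rfl
  have hf : f * f = f := by
    rw [hfdef, ← fqmk_mul]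
    apply (fqmk_eq hT).mpr
    apply mkT
    rw [toMS_mul, hwfMS]
    apply helperA _ _ (add_ne_zero_left hEW0) hEW0
    intro ℓ
    simp only [Multiset.count_add, Multiset.count_nsmul]
    rcases Nat.eq_zero_or_pos (W.count ℓ) with hWc | hWc
    · left; rw [hWc]; ring_nf
    · right
      have hz : E ≤ E * W.count ℓ := Nat.le_mul_of_pos_right E hWc
      refine ⟨by omega, by omega, ?_⟩
      rw [show E * W.count ℓ + E * W.count ℓ = E * W.count ℓ + E * W.count ℓ from rfl]
      exact mod_eq_of_dvd_dvd (dvd_add (hPE.mul_right _) (hPE.mul_right _)) (hPE.mul_right _)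
  have hstar : ∀ ℓ0, ℓ0 ∈ W → U.count ℓ0 % P = V'.count ℓ0 % P := by
    intro ℓ0 hℓ0
    have hWc0 : 1 ≤ W.count ℓ0 := Multiset.one_le_count_iff_mem.mpr hℓ0
    set τ' : ℕ → Word := fun n => if n = ℓ0 then wf * of ℓ0 else wf with hτ'
    set g : ℕ → FQ hT := fun n => fqmk hT (τ' n) with hg'
    -- unit structure
    have hgn : ∀ n, f * g n = g n ∧ ∃ y, g n * y = f ∧ f * y = y := by
      intro n
      by_cases hn : n = ℓ0
      · constructor
        · rw [hg', hfdef]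
          simp only [hn, hτ', if_pos rfl]
          rw [← fqmk_mul]
          apply (fqmk_eq hT).mpr
          apply mkT
          rw [toMS_mul, toMS_mul, toMS_of, hwfMS]
          apply helperA _ _ (add_ne_zero_left hEW0) (add_ne_zero_left hEW0)
          intro b
          simp only [Multiset.count_add, Multiset.count_nsmul, Multiset.count_singleton]
          rcases Nat.eq_zero_or_pos (W.count b) with hWc | hWc
          · left; rw [hWc]; ring
          · right
            have hz : E ≤ E * W.count b := Nat.le_mul_of_pos_right E hWc
            refine ⟨by omega, by omega, ?_⟩
            rw [show E * W.count b + (E * W.count b + (if b = ℓ0 then 1 else 0)) =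
              (E * W.count b + (if b = ℓ0 then 1 else 0)) + E * W.count b by ring]
            exact add_dvd_mod (hPE.mul_right _)
        · refine ⟨fqmk hT (wf * spow (of ℓ0) (K * E - 2)), ?_, ?_⟩
          · rw [hg', hfdef]
            simp only [hn, hτ', if_pos rfl]
            rw [← fqmk_mul]
            apply (fqmk_eq hT).mpr
            apply mkT
            rw [toMS_mul, toMS_mul, toMS_mul, toMS_of, hwfMS, toMS_spow, toMS_of,
              nsmul_singleton_eq_replicate, show K * E - 2 + 1 = K * E - 1 by
                have : 2 ≤ K * E := le_trans hE2 (Nat.le_mul_of_pos_left E (by omega))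
                omega]
            apply helperA _ _ (add_ne_zero_left (add_ne_zero_left hEW0)) hEW0
            intro b
            have hKE2 : 2 ≤ K * E := le_trans hE2 (Nat.le_mul_of_pos_left E (by omega))
            simp only [Multiset.count_add, Multiset.count_nsmul, Multiset.count_singleton,
              count_repl]
            by_cases hb : b = ℓ0
            · right
              subst hb
              have hz : E ≤ E * W.count b := Nat.le_mul_of_pos_right E (by omega)
              refine ⟨by simp; omega, by omega, ?_⟩
              simp only [eq_self_iff_true, if_true]
              rw [show E * W.count b + 1 + (E * W.count b + (K * E - 1)) =
                E * W.count b + (E * W.count b + K * E) by omega]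
              rw [show E * W.count b + (E * W.count b + K * E) =
                E * W.count b + (E * W.count b + K * E) from rfl]
              exact add_dvd_mod (dvd_add (hPE.mul_right _) (hPK.mul_right _))
            · simp only [hb, if_false]
              rcases Nat.eq_zero_or_pos (W.count b) with hWc | hWc
              · left; rw [hWc]; ring
              · right
                have hz : E ≤ E * W.count b := Nat.le_mul_of_pos_right E hWc
                refine ⟨by omega, by omega, ?_⟩
                rw [show E * W.count b + 0 + (E * W.count b + 0) =
                  E * W.count b + E * W.count b by ring]
                rw [show E * W.count b + E * W.count b =
                  E * W.count b + E * W.count b from rfl]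
                exact add_dvd_mod (hPE.mul_right _)
          · rw [hfdef, ← fqmk_mul]
            apply (fqmk_eq hT).mpr
            apply mkT
            rw [toMS_mul, toMS_mul, toMS_spow, toMS_of, nsmul_singleton_eq_replicate,
              hwfMS, show K * E - 2 + 1 = K * E - 1 by
                have : 2 ≤ K * E := le_trans hE2 (Nat.le_mul_of_pos_left E (by omega))
                omega]
            apply helperA _ _ (add_ne_zero_left hEW0) (add_ne_zero_left hEW0)
            intro b
            simp only [Multiset.count_add, Multiset.count_nsmul, count_repl]
            rcases Nat.eq_zero_or_pos (W.count b) with hWc | hWc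
            · left; rw [hWc]; ring
            · right
              have hz : E ≤ E * W.count b := Nat.le_mul_of_pos_right E hWc
              refine ⟨by omega, by omega, ?_⟩
              rw [show E * W.count b + (E * W.count b + (if b = ℓ0 then K * E - 1 else 0)) =
                (E * W.count b + (if b = ℓ0 then K * E - 1 else 0)) + E * W.count b by ring]
              exact add_dvd_mod (hPE.mul_right _)
      · constructor
        · rw [hg', hfdef]
          simp only [hτ', hn, if_false]
          rw [← fqmk_mul]
          exact (fqmk_eq hT).mpr (mkT _ _ (by
            rw [toMS_mul, hwfMS]
            apply helperA _ _ (add_ne_zero_left hEW0) hEW0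
            intro b
            simp only [Multiset.count_add, Multiset.count_nsmul]
            rcases Nat.eq_zero_or_pos (W.count b) with hWc | hWc
            · left; rw [hWc]; ring_nf
            · right
              have hz : E ≤ E * W.count b := Nat.le_mul_of_pos_right E hWc
              refine ⟨by omega, by omega, ?_⟩
              rw [show E * W.count b + E * W.count b =
                E * W.count b + E * W.count b from rfl]
              exact add_dvd_mod (hPE.mul_right _)))
        · refine ⟨f, ?_, hf⟩
          rw [hg', hfdef]
          simp only [hτ', hn, if_false]
          rw [← fqmk_mul]
          exact (fqmk_eq hT).mpr (mkT _ _ (by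
            rw [toMS_mul, hwfMS]
            apply helperA _ _ (add_ne_zero_left hEW0) hEW0
            intro b
            simp only [Multiset.count_add, Multiset.count_nsmul]
            rcases Nat.eq_zero_or_pos (W.count b) with hWc | hWc
            · left; rw [hWc]; ring_nf
            · right
              have hz : E ≤ E * W.count b := Nat.le_mul_of_pos_right E hWc
              refine ⟨by omega, by omega, ?_⟩
              rw [show E * W.count b + E * W.count b =
                E * W.count b + E * W.count b from rfl]
              exact add_dvd_mod (hPE.mul_right _)))
    have hGeq := G_extract hT N K hN hK (FQ_per hT N K hN hper) hG f hf g hgn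
    rw [hg'] at hGeq
    have hGeq2 : fqmk hT (FreeSemigroup.lift τ' u) = fqmk hT (FreeSemigroup.lift τ' v) := by
      rw [← fqmk_lift, ← fqmk_lift]
      exact hGeq
    have hMRg : MR T (toMS (FreeSemigroup.lift τ' u)) (toMS (FreeSemigroup.lift τ' v)) :=
      ⟨_, _, rfl, rfl, (fqmk_eq hT).mp hGeq2⟩
    have hbindW : ∀ s' : Multiset ℕ, (s'.bind fun n => toMS (τ' n)) =
        s'.card • (E • W) + replicate (s'.count ℓ0) ℓ0 := by
      intro s'
      induction s' using Multiset.induction_on with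
      | empty => simp
      | cons x s' ih =>
          rw [Multiset.cons_bind, ih, Multiset.card_cons]
          by_cases hx : x = ℓ0
          · subst hx
            have ht : toMS (τ' x) = E • W + {x} := by
              rw [hτ']
              simp only [eq_self_iff_true, if_true]
              rw [toMS_mul, hwfMS, toMS_of]
            rw [ht, Multiset.count_cons_self]
            ext b
            simp only [Multiset.count_add, Multiset.count_nsmul, Multiset.count_singleton,
              count_repl, Nat.succ_mul]
            split_ifs <;> omega
          · have ht : toMS (τ' x) = E • W := by
              rw [hτ']
              simp only [hx, if_false]
              exact hwfMS
            rw [ht, Multiset.count_cons_of_ne (fun h => hx h.symm)]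
            ext b
            simp only [Multiset.count_add, Multiset.count_nsmul, count_repl, Nat.succ_mul]
            split_ifs <;> omega
    rw [toMS_lift, toMS_lift, hbindW, hbindW] at hMRg
    -- normalize card • (E • W) down to E • W
    have hreduce : ∀ (cd a0 : ℕ), 1 ≤ cd →
        MR T (cd • (E • W) + replicate a0 ℓ0) (E • W + replicate a0 ℓ0) := by
      intro cd a0 hcd
      apply helperA _ _ (add_ne_zero_left (nsmul_ne_zero hcd hEW0)) (add_ne_zero_left hEW0)
      intro b
      simp only [Multiset.count_add, Multiset.count_nsmul, count_repl]
      rcases Nat.eq_zero_or_pos (W.count b) with hWc | hWc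
      · left; rw [hWc]; ring_nf
      · right
        have hz : E ≤ E * W.count b := Nat.le_mul_of_pos_right E hWc
        have hzz : E * W.count b ≤ cd * (E * W.count b) :=
          Nat.le_mul_of_pos_left _ (by omega)
        obtain ⟨cc, rfl⟩ : ∃ cc, cd = cc + 1 := ⟨cd - 1, by omega⟩
        refine ⟨by omega, by omega, ?_⟩
        rw [show (cc + 1) * (E * W.count b) + (if b = ℓ0 then a0 else 0) =
          (E * W.count b + (if b = ℓ0 then a0 else 0)) + cc * (E * W.count b) by ring]
        exact add_dvd_mod ((hPE.mul_right _).mul_left _)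
    have hUcard : 1 ≤ U.card := by
      rcases Nat.eq_zero_or_pos U.card with h | h
      · exact absurd (Multiset.card_eq_zero.mp h) hU0
      · exact h
    have hVcard : 1 ≤ V'.card := by
      rcases Nat.eq_zero_or_pos V'.card with h | h
      · exact absurd (Multiset.card_eq_zero.mp h) hV0
      · exact h
    have hstar0 : MR T (E • W + replicate (U.count ℓ0) ℓ0) (E • W + replicate (V'.count ℓ0) ℓ0) :=
      (((hreduce U.card (U.count ℓ0) hUcard).symm hT).trans hT hMRg).trans hT
        (hreduce V'.card (V'.count ℓ0) hVcard)
    have hsub0 := MR.subst hT (fun _ => of 0) hstar0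
    have hb : ∀ s' : Multiset ℕ,
        (s'.bind fun n => toMS ((fun (_ : ℕ) => of (0:ℕ)) n)) = replicate s'.card 0 :=
      fun s' => bind_const_singleton s' 0
    rw [hb, hb] at hsub0
    simp only [Multiset.card_add, Multiset.card_nsmul, Multiset.card_replicate] at hsub0
    have hpp := hmodPP _ _ hsub0
    exact Nat.ModEq.add_left_cancel' _ hpp
  -- ====== the final chain ======
  have hB₁ : (N • S₁ + R₁ : Multiset ℕ) ≠ 0 := add_ne_zero_left (nsmul_ne_zero hN hS₁)
  have hB₂ : (N • S₂ + R₂ : Multiset ℕ) ≠ 0 := add_ne_zero_left (nsmul_ne_zero hN hS₂)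
  -- absorption of E • S₁ by U
  have habs : ∀ (S R X : Multiset ℕ), S ≠ 0 → MR T X (N • S + R) → MR T X (X + E • S) := by
    intro S R X hS hX
    have hstep : MR T (N • S + R) (N • S + R + E • S) := by
      apply adjust _ _ (add_ne_zero_left (nsmul_ne_zero hN hS))
        (add_ne_zero_left (add_ne_zero_left (nsmul_ne_zero hN hS)))
      intro ℓ
      simp only [Multiset.count_add, Multiset.count_nsmul]
      rcases Nat.eq_zero_or_pos (S.count ℓ) with hSc | hSc
      · left; rw [hSc]; ring_nf
      · right; left
        have h1 : N ≤ N * S.count ℓ := Nat.le_mul_of_pos_right N hSc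
        refine ⟨by omega, by omega, ?_⟩
        rw [show N * S.count ℓ + R.count ℓ + E * S.count ℓ =
          (N * S.count ℓ + R.count ℓ) + E * S.count ℓ by ring]
        exact (add_dvd_mod (hKE.mul_right _)).symm
    have h2 := hX.add hT (E • S)
    exact (hX.trans hT hstep).trans hT (h2.symm hT)
  have hAbs1 : MR T U (U + E • S₁) := habs S₁ R₁ U hS₁ hU1
  have hAbs2 : MR T V' (V' + E • S₂) := habs S₂ R₂ V' hS₂ hV1
  -- adding the other rider
  have haddO : ∀ (X Sa Sb : Multiset ℕ), X ≠ 0 → Sa ≠ 0 → Sb ≠ 0 →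
      (∀ ℓ ∈ Sb, m ≤ X.count ℓ) → MR T (X + E • Sa) (X + E • Sa + E • Sb) := by
    intro X Sa Sb hX hSa hSb hm'
    apply adjust _ _ (add_ne_zero_left hX) (add_ne_zero_left (add_ne_zero_left hX))
    intro ℓ
    simp only [Multiset.count_add, Multiset.count_nsmul]
    rcases Nat.eq_zero_or_pos (Sb.count ℓ) with hSc | hSc
    · left; rw [hSc]; ring_nf
    · by_cases hSa' : ℓ ∈ Sa
      · right; right; left
        have h1 : 1 ≤ Sa.count ℓ := Multiset.one_le_count_iff_mem.mpr hSa'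
        have h2 : E ≤ E * Sa.count ℓ := Nat.le_mul_of_pos_right E (by omega)
        refine ⟨by omega, by omega, ?_⟩
        rw [show X.count ℓ + E * Sa.count ℓ + E * Sb.count ℓ =
          (X.count ℓ + E * Sa.count ℓ) + E * Sb.count ℓ by ring]
        exact (add_dvd_mod (hPE.mul_right _)).symm
      · right; right; right
        have h1 : Sa.count ℓ = 0 := Multiset.count_eq_zero.mpr hSa'
        have h2 : m ≤ X.count ℓ := hm' ℓ (Multiset.count_pos.mp hSc)
        refine ⟨by omega, by omega, ?_, Sa, hSa, hSa', ?_, ?_⟩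
        · rw [show X.count ℓ + E * Sa.count ℓ + E * Sb.count ℓ =
            (X.count ℓ + E * Sa.count ℓ) + E * Sb.count ℓ by ring]
          exact (add_dvd_mod (hPE.mul_right _)).symm
        · rw [Multiset.le_iff_count]
          intro b
          simp only [Multiset.count_add, Multiset.count_nsmul]
          omega
        · rw [Multiset.le_iff_count]
          intro b
          simp only [Multiset.count_add, Multiset.count_nsmul]
          omega
  have hstep5 : MR T (U + E • S₁) (U + E • S₁ + E • S₂) :=
    haddO U S₁ S₂ hU0 hS₁ hS₂ hUS₂
  have hstep7 : MR T (V' + E • S₂) (V' + E • S₂ + E • S₁) :=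
    haddO V' S₂ S₁ hV0 hS₂ hS₁ hVS₁
  -- the middle step
  have hstep6 : MR T (U + E • S₁ + E • S₂) (V' + E • S₁ + E • S₂) := by
    apply adjust _ _ (add_ne_zero_left (add_ne_zero_left hU0))
      (add_ne_zero_left (add_ne_zero_left hV0))
    intro ℓ
    simp only [Multiset.count_add, Multiset.count_nsmul]
    by_cases heq : U.count ℓ = V'.count ℓ
    · left; rw [heq]
    · have hWmem : ℓ ∈ W := by
        rw [hW, ← Multiset.count_pos, Multiset.count_add]
        omega
      have hmod := hstar ℓ hWmem
      have hboth : m ≤ U.count ℓ ∧ m ≤ V'.count ℓ := by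
        have := hcaps ℓ
        omega
      have hmodfull : (U.count ℓ + E * S₁.count ℓ + E * S₂.count ℓ) % P =
          (V'.count ℓ + E * S₁.count ℓ + E * S₂.count ℓ) % P := by
        have h1 : U.count ℓ ≡ V'.count ℓ [MOD P] := hmod
        have h2 := (h1.add_right (E * S₁.count ℓ)).add_right (E * S₂.count ℓ)
        exact h2
      by_cases hSa' : ℓ ∈ S₁
      · right; right; left
        have h1 : 1 ≤ S₁.count ℓ := Multiset.one_le_count_iff_mem.mpr hSa'
        have h2 : E ≤ E * S₁.count ℓ := Nat.le_mul_of_pos_right E (by omega)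
        exact ⟨by omega, by omega, hmodfull⟩
      · by_cases hSb' : ℓ ∈ S₂
        · right; right; left
          have h1 : 1 ≤ S₂.count ℓ := Multiset.one_le_count_iff_mem.mpr hSb'
          have h2 : E ≤ E * S₂.count ℓ := Nat.le_mul_of_pos_right E (by omega)
          exact ⟨by omega, by omega, hmodfull⟩
        · right; right; right
          have h1 : S₁.count ℓ = 0 := Multiset.count_eq_zero.mpr hSa'
          refine ⟨by omega, by omega, hmodfull, S₁, hS₁, hSa', ?_, ?_⟩
          · rw [Multiset.le_iff_count]
            intro b
            simp only [Multiset.count_add, Multiset.count_nsmul]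
            omega
          · rw [Multiset.le_iff_count]
            intro b
            simp only [Multiset.count_add, Multiset.count_nsmul]
            omega
  -- reorder V' + E•S₁ + E•S₂ = V' + E•S₂ + E•S₁
  have hre : (V' + E • S₁ + E • S₂ : Multiset ℕ) = V' + E • S₂ + E • S₁ := by
    ext b
    simp only [Multiset.count_add]
    omega
  have hfinal : MR T U V' := by
    refine ((((hAbs1.trans hT hstep5).trans hT hstep6).trans hT ?_).trans hT (hAbs2.symm hT))
    rw [hre]
    exact hstep7.symm hT
  exact hfinal.words hT rfl rfl

end Decomp
open FreeSemigroup Multiset Decomp in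
/-- Every commutative semigroup variety `V ≠ COM`
decomposes as `V = G ∨ C_m ∨ N` with `G` an Abelian (i.e. commutative)
periodic group variety, `m ≥ 0`, and `N` a nil-variety. -/
theorem decomposition_of_commutative_variety (V : ComVariety) (hV : V ≠ COMcom) :
    ∃ (G N : ComVariety) (m : ℕ), IsGroupVariety G.1 ∧ IsPeriodic G.1 ∧
      IsNilVariety N.1 ∧ V = G ⊔ Ccom m ⊔ N := by
  classical
  set T := V.1.th with hTdef
  have hT : Good T := ⟨V.1.closed, V.2⟩
  have hsub : eqTh {commId} ⊆ T := by
    have h1 : ({commId} : Set SgId) ⊆ T := by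
      intro e he
      rw [Set.mem_singleton_iff] at he
      subst he
      exact V.2
    calc eqTh {commId} ⊆ eqTh T := eqTh_mono h1
      _ = T := V.1.closed
  have hVne : ¬ T ⊆ eqTh {commId} := by
    intro hcon
    apply hV
    apply Subtype.ext
    apply SgVariety.ext'
    exact Set.Subset.antisymm hcon hsub
  obtain ⟨e₀, h0, h0n⟩ := Set.not_subset.mp hVne
  obtain ⟨u₀, v₀⟩ := e₀
  have hneMS : toMS u₀ ≠ toMS v₀ := fun h => h0n (comm_eqTh_of_toMS_eq h)
  obtain ⟨K, N, m, hK, hN, hxNK, hmOK, hmain⟩ := theory_decomp hT h0 hneMS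
  set gid : SgId := (spow xw (K - 1) * yw, yw) with hgiddef
  set Gv : SgVariety := varOf (T ∪ {gid}) with hGvdef
  set Nv : SgVariety := varOf (T ∪ zeroPair (spow xw (N - 1)) 1) with hNvdef
  have hGcomm : commId ∈ Gv.th := subset_eqTh _ (Set.mem_union_left _ hT.comm)
  have hNcomm : commId ∈ Nv.th := subset_eqTh _ (Set.mem_union_left _ hT.comm)
  refine ⟨⟨Gv, hGcomm⟩, ⟨Nv, hNcomm⟩, m, ?_, ?_, ?_, ?_⟩
  · -- IsGroupVariety
    intro S _ hNE hS
    have hS' : Models S (T ∪ {gid}) := fun e he => hS e (subset_eqTh _ he)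
    have hc : ∀ a b : S, a * b = b * a := comm_of_models (Set.mem_union_left _ hT.comm) hS'
    have hgid : ∀ a b : S, spow a (K - 1) * b = b := by
      intro a b
      have h := hS' gid (Set.mem_union_right _ rfl) (fun n => if n = 0 then a else b)
      rw [hgiddef] at h
      rw [show ((spow xw (K-1) * yw, yw) : SgId).1 = spow xw (K-1) * yw from rfl] at h
      rw [map_mul, lift_spow] at h
      exact h
    obtain ⟨a₀⟩ := hNE
    set e := spow a₀ (K - 1) with hedef
    have he1 : ∀ b, e * b = b := fun b => hgid a₀ b
    have he2 : ∀ b, b * e = b := fun b => by rw [hc b e]; exact he1 b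
    refine ⟨e, fun a => ⟨he1 a, he2 a⟩, ?_⟩
    intro b
    by_cases hK1 : K = 1
    · have hall : ∀ x : S, x = e := by
        intro x
        have h2 : spow x (K - 1) * e = e := hgid x e
        rw [hK1] at h2
        have h3 : x * e = e := h2
        have h4 : x * e = x := he2 x
        rw [h4] at h3
        exact h3
      refine ⟨e, ?_, ?_⟩
      · rw [hall b]; exact he1 e
      · rw [hall b]; exact he1 e
    · refine ⟨spow b (K - 2) * e, ?_, ?_⟩
      · rw [← mul_assoc]
        have hb : b * spow b (K - 2) = spow b (K - 1) := by
          rw [show K - 1 = (K - 2) + 1 by omega]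
          rfl
        rw [hb]
        exact hgid b e
      · rw [hc (spow b (K-2) * e) b, ← mul_assoc]
        have hb : b * spow b (K - 2) = spow b (K - 1) := by
          rw [show K - 1 = (K - 2) + 1 by omega]
          rfl
        rw [hb]
        exact hgid b e
  · -- IsPeriodic
    refine ⟨N - 1, K - 1, ?_⟩
    rw [show N - 1 + (K - 1) + 1 = N + K - 1 by omega]
    exact subset_eqTh _ (Set.mem_union_left _ hxNK)
  · -- IsNilVariety
    intro S _ hNE hS
    have hS' : Models S (T ∪ zeroPair (spow xw (N - 1)) 1) := fun e he => hS e (subset_eqTh _ he)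
    have h1 : ∀ a b : S, spow a (N - 1) * b = spow a (N - 1) := by
      intro a b
      have h := hS' (spow xw (N-1) * of 1, spow xw (N-1))
        (Set.mem_union_right _ (Set.mem_insert _ _)) (fun n => if n = 0 then a else b)
      rw [show ((spow xw (N-1) * of 1, spow xw (N-1)) : SgId).1 =
        spow xw (N-1) * of 1 from rfl] at h
      rw [map_mul, lift_spow] at h
      exact h
    have h2 : ∀ a b : S, b * spow a (N - 1) = spow a (N - 1) := by
      intro a b
      have h := hS' (of 1 * spow xw (N-1), spow xw (N-1))
        (Set.mem_union_right _ (Set.mem_insert_iff.mpr (Or.inr rfl))) (fun n => if n = 0 then a else b)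
      rw [show ((of 1 * spow xw (N-1), spow xw (N-1)) : SgId).1 =
        of 1 * spow xw (N-1) from rfl] at h
      rw [map_mul, lift_spow] at h
      exact h
    obtain ⟨a₀⟩ := hNE
    refine ⟨spow a₀ (N - 1), fun a => ⟨h1 a₀ a, h2 a₀ a⟩, ?_⟩
    intro a
    refine ⟨N - 1, ?_⟩
    have h3 : spow a (N - 1) * spow a₀ (N - 1) = spow a₀ (N - 1) := h2 a₀ (spow a (N - 1))
    have h4 : spow a (N - 1) * spow a₀ (N - 1) = spow a (N - 1) := h1 a (spow a₀ (N - 1))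
    rw [h4] at h3
    exact h3
  · -- the lattice equality
    apply Subtype.ext
    apply SgVariety.ext'
    show T = _
    have hth : ((⟨Gv, hGcomm⟩ ⊔ Ccom m ⊔ ⟨Nv, hNcomm⟩ : ComVariety)).1.th =
        (Gv.th ∩ (Cvar m).th) ∩ Nv.th := rfl
    rw [hth]
    apply Set.Subset.antisymm
    · intro e he
      exact ⟨⟨subset_eqTh _ (Set.mem_union_left _ he), hmOK he⟩,
        subset_eqTh _ (Set.mem_union_left _ he)⟩
    · rintro ⟨u, v⟩ ⟨⟨hg, hcth⟩, hn⟩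
      exact hmain u v hg hcth hn
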